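/- arXiv:2101.07126 — 5 statements merged into one kernel-verified Lean document; each statement's English description precedes it below -/
import Mathlib

section
/- For every natural number m ≥ 1 there exists a ReLU MLP of depth m+1 and width 4 (i.e., m+1 hidden layers, each of width at most 4) whose output F satisfies F(x) > 0 if and only if x lies in the interior of P_m. -/
open Real

/-- Componentwise ReLU. -/
noncomputable def relu {n : ℕ} (z : Fin n → ℝ) : Fin n → ℝ := fun j => max (z j) 0

/-- Hidden layers of a ReLU MLP on `ℝ²`: `mlpHidden A1 b1 A b i` is the
`(i+1)`-st hidden layer `h_{i+1}`. -/
noncomputable def mlpHidden {w : ℕ} (A1 : Matrix (Fin w) (Fin 2) ℝ) (b1 : Fin w → ℝ)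
    (A : ℕ → Matrix (Fin w) (Fin w) ℝ) (b : ℕ → Fin w → ℝ) :
    ℕ → (Fin 2 → ℝ) → (Fin w → ℝ)
  | 0, x => relu (A1.mulVec x + b1)
  | (i + 1), x => relu ((A i).mulVec (mlpHidden A1 b1 A b i x) + b i)

/-- `F : ℝ² → ℝ` is computed by a ReLU MLP with `d` hidden layers, each of width `w`. -/
def IsReluMLP (d w : ℕ) (F : (Fin 2 → ℝ) → ℝ) : Prop :=
  ∃ (A1 : Matrix (Fin w) (Fin 2) ℝ) (b1 : Fin w → ℝ)
    (A : ℕ → Matrix (Fin w) (Fin w) ℝ) (b : ℕ → Fin w → ℝ)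
    (v : Fin w → ℝ) (c : ℝ),
    ∀ x, F x = (∑ j, v j * mlpHidden A1 b1 A b (d - 1) x j) + c

/-- Outward unit normal of the `k`-th edge of the regular polygon `P m`. -/
noncomputable def polyNormal (m k : ℕ) : Fin 2 → ℝ :=
  ![Real.cos (π / 2 + (2 * (k : ℝ) + 1) * π / (2 : ℝ) ^ (m + 1)),
    Real.sin (π / 2 + (2 * (k : ℝ) + 1) * π / (2 : ℝ) ^ (m + 1))]

/-- The regular polygon `P m` with `2^(m+1)` vertices inscribed in the unit circle
with a vertex at `(0,1)`. -/
noncomputable def P (m : ℕ) : Set (Fin 2 → ℝ) :=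
  {x | ∀ k < 2 ^ (m + 1),
    x 0 * polyNormal m k 0 + x 1 * polyNormal m k 1 ≤ Real.cos (π / (2 : ℝ) ^ (m + 1))}

noncomputable def eVec (θ : ℝ) : Fin 2 → ℝ := ![Real.cos θ, Real.sin θ]

def dotp (x u : Fin 2 → ℝ) : ℝ := x 0 * u 0 + x 1 * u 1

lemma dotp_eVec (x : Fin 2 → ℝ) (θ : ℝ) :
    dotp x (eVec θ) = x 0 * Real.cos θ + x 1 * Real.sin θ := by
  simp [dotp, eVec]

lemma cos_pdt (s : ℝ) : Real.cos (π/2 + s) = -Real.sin s := by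
  rw [Real.cos_add]; simp

lemma sin_pdt (s : ℝ) : Real.sin (π/2 + s) = Real.cos s := by
  rw [Real.sin_add]; simp

lemma dotp_eVec_pi_div_two_add (x : Fin 2 → ℝ) (s : ℝ) :
    dotp x (eVec (π / 2 + s)) = -(x 0) * Real.sin s + x 1 * Real.cos s := by
  rw [dotp_eVec, cos_pdt, sin_pdt]; ring

noncomputable def Yfun : ℕ → (Fin 2 → ℝ) → (Fin 2 → ℝ)
  | 0, x => x
  | (j+1), x =>
      ![-|Yfun j x 0| * Real.cos (π / 2 ^ (j+1)) + Yfun j x 1 * Real.sin (π / 2 ^ (j+1)),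
        |Yfun j x 0| * Real.sin (π / 2 ^ (j+1)) + Yfun j x 1 * Real.cos (π / 2 ^ (j+1))]

lemma dot_Yfun_succ (j : ℕ) (x : Fin 2 → ℝ) (θ : ℝ) :
    dotp (Yfun (j+1) x) (eVec θ) =
      -|Yfun j x 0| * Real.cos (θ + π / 2 ^ (j+1)) + Yfun j x 1 * Real.sin (θ + π / 2 ^ (j+1)) := by
  simp [Yfun, dotp, eVec, Real.cos_add, Real.sin_add]
  ring

/-- The core folding step. -/
lemma core (a b t : ℝ) (K' M : ℕ) (hK' : 1 ≤ K') (hM : 2 * K' ≤ M) :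
    (∀ k < K', |a| * Real.sin ((2*(k:ℝ)+1)*π/M) + b * Real.cos ((2*(k:ℝ)+1)*π/M) < t) ↔
    (∀ k < 2*K', -a * Real.sin ((2*(k:ℝ)+1-2*(K':ℝ))*π/M) + b * Real.cos ((2*(k:ℝ)+1-2*(K':ℝ))*π/M) < t) := by
  have hMpos : (0:ℝ) < M := by
    have : 0 < M := by omega
    exact_mod_cast this
  have hsin : ∀ i, i < K' → 0 ≤ Real.sin ((2*(i:ℝ)+1)*π/M) := by
    intro i hi
    apply le_of_lt
    apply Real.sin_pos_of_pos_of_lt_pi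
    · positivity
    · rw [div_lt_iff₀ hMpos]
      have h1 : (2*(i:ℝ)+1) < M := by exact_mod_cast (by omega : 2*i+1 < M)
      nlinarith [Real.pi_pos]
  constructor
  · intro h k hk
    rcases lt_or_ge k K' with hkK | hkK
    · have hidx : K' - 1 - k < K' := by omega
      have e : (2*(k:ℝ)+1-2*(K':ℝ)) = -(2*((K' - 1 - k : ℕ):ℝ)+1) := by
        have h1 : k + 1 ≤ K' := by omega
        have e2 : K' - 1 - k = K' - (k+1) := by omega
        rw [e2]
        push_cast [h1]
        ring
      rw [e, show (-(2*((K' - 1 - k : ℕ):ℝ)+1))*π/M = -((2*((K' - 1 - k : ℕ):ℝ)+1)*π/M) by ring,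
        Real.sin_neg, Real.cos_neg]
      have hh := h (K' - 1 - k) hidx
      have hs := hsin (K' - 1 - k) hidx
      nlinarith [le_abs_self a]
    · have hidx : k - K' < K' := by omega
      have e : (2*(k:ℝ)+1-2*(K':ℝ)) = 2*((k - K' : ℕ):ℝ)+1 := by
        push_cast [hkK]
        ring
      rw [e]
      have hh := h (k - K') hidx
      have hs := hsin (k - K') hidx
      nlinarith [neg_abs_le a]
  · intro h k hk
    rcases abs_cases a with ⟨ha, _⟩ | ⟨ha, _⟩
    · have hh := h (K' - 1 - k) (by omega)
      have e : (2*((K' - 1 - k : ℕ):ℝ)+1-2*(K':ℝ)) = -(2*(k:ℝ)+1) := by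
        have h1 : k + 1 ≤ K' := by omega
        have e2 : K' - 1 - k = K' - (k+1) := by omega
        rw [e2]
        push_cast [h1]
        ring
      rw [e, show (-(2*(k:ℝ)+1))*π/M = -((2*(k:ℝ)+1)*π/M) by ring,
        Real.sin_neg, Real.cos_neg] at hh
      rw [ha]
      linarith
    · have hh := h (k + K') (by omega)
      have e : (2*((k + K' : ℕ):ℝ)+1-2*(K':ℝ)) = 2*(k:ℝ)+1 := by
        push_cast
        ring
      rw [e] at hh
      rw [ha]
      linarith

/-- The main invariant. -/
lemma inv_lemma (m : ℕ) : ∀ j, j ≤ m + 1 → ∀ (x : Fin 2 → ℝ) (t : ℝ),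
    ((∀ k : ℕ, k < 2^(m+1-j) →
        dotp (Yfun j x) (eVec (π/2 + (2*(k:ℝ)+1 - (2:ℝ)^(m+1-j)) * π / (2:ℝ)^(m+1))) < t) ↔
     (∀ k : ℕ, k < 2^(m+1) →
        dotp x (eVec (π/2 + (2*(k:ℝ)+1) * π / (2:ℝ)^(m+1))) < t)) := by
  intro j
  induction j with
  | zero =>
    intro _ x t
    simp only [Nat.sub_zero, Yfun]
    have key : ∀ k : ℕ, k < 2^(m+1) → eVec (π/2 + (2*(k:ℝ)+1 - (2:ℝ)^(m+1)) * π / (2:ℝ)^(m+1))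
        = eVec (π/2 + (2*((if k < 2^m then k + 2^m else k - 2^m : ℕ):ℝ)+1) * π / (2:ℝ)^(m+1)) := by
      intro k hk
      by_cases hksm : k < 2^m
      · simp only [if_pos hksm]
        have e : π/2 + (2*((k + 2^m : ℕ):ℝ)+1) * π / (2:ℝ)^(m+1)
            = (π/2 + (2*(k:ℝ)+1 - (2:ℝ)^(m+1)) * π / (2:ℝ)^(m+1)) + 2*π := by
          have hNr : (2:ℝ)^(m+1) = 2*(2:ℝ)^m := by rw [pow_succ]; ring
          have h2 : ((2:ℝ)^(m+1)) ≠ 0 := by positivity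
          push_cast
          rw [hNr]
          field_simp
          ring
        rw [e]
        funext i
        fin_cases i <;> simp [eVec, Real.cos_add_two_pi, Real.sin_add_two_pi]
      · simp only [if_neg hksm]
        have hle : 2^m ≤ k := le_of_not_gt hksm
        have e : (2*((k - 2^m : ℕ):ℝ)+1) = 2*(k:ℝ)+1 - (2:ℝ)^(m+1) := by
          push_cast [hle]
          rw [pow_succ]
          ring
        rw [e]
    have hNN : (2:ℕ)^(m+1) = 2^m + 2^m := by rw [pow_succ]; ring
    constructor
    · intro h k hk
      by_cases hksm : k < 2^m
      · have hσ : k + 2^m < 2^(m+1) := by omega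
        have := h (k + 2^m) hσ
        rw [key (k + 2^m) hσ] at this
        simp only [if_neg (by omega : ¬ k + 2^m < 2^m), Nat.add_sub_cancel] at this
        exact this
      · have hσ : k - 2^m < 2^(m+1) := by omega
        have := h (k - 2^m) hσ
        rw [key (k - 2^m) hσ] at this
        have hlt : k - 2^m < 2^m := by omega
        simp only [if_pos hlt] at this
        rw [Nat.sub_add_cancel (le_of_not_gt hksm)] at this
        exact this
    · intro h k hk
      rw [key k hk]
      apply h
      by_cases hksm : k < 2^m
      · simp only [if_pos hksm]; omega
      · simp only [if_neg hksm]; omega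
  | succ j ih =>
    intro hj x t
    have hjm : j ≤ m := by omega
    have hmj : m + 1 - j = (m - j) + 1 := by omega
    have hmj2 : m + 1 - (j+1) = m - j := by omega
    have hpow : (2:ℝ)^(m-j) * (2:ℝ)^(j+1) = (2:ℝ)^(m+1) := by
      rw [← pow_add]; congr 1; omega
    have e0 : (2:ℝ)^(m-j) * π / (2:ℝ)^(m+1) = π / (2:ℝ)^(j+1) := by
      rw [← hpow, mul_div_mul_left _ _ (by positivity : (0:ℝ) < (2:ℝ)^(m-j)).ne']
    have hKM : 2 * 2^(m-j) ≤ 2^(m+1) := by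
      rw [← pow_succ']
      exact Nat.pow_le_pow_right (by norm_num) (by omega)
    have hcore := core (Yfun j x 0) (Yfun j x 1) t (2^(m-j)) (2^(m+1))
      Nat.one_le_two_pow hKM
    push_cast at hcore
    have eL : ∀ i : ℕ,
        dotp (Yfun (j+1) x) (eVec (π/2 + (2*(i:ℝ)+1 - (2:ℝ)^(m+1-(j+1))) * π / (2:ℝ)^(m+1)))
        = |Yfun j x 0| * Real.sin ((2*(i:ℝ)+1)*π/(2:ℝ)^(m+1))
          + Yfun j x 1 * Real.cos ((2*(i:ℝ)+1)*π/(2:ℝ)^(m+1)) := by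
      intro i
      rw [dot_Yfun_succ]
      have earg : (π/2 + (2*(i:ℝ)+1 - (2:ℝ)^(m+1-(j+1))) * π / (2:ℝ)^(m+1)) + π / 2^(j+1)
          = π/2 + (2*(i:ℝ)+1)*π/(2:ℝ)^(m+1) := by
        rw [hmj2, ← e0]; ring
      rw [earg, cos_pdt, sin_pdt]
      ring
    have eR : ∀ i : ℕ,
        dotp (Yfun j x) (eVec (π/2 + (2*(i:ℝ)+1 - (2:ℝ)^(m+1-j)) * π / (2:ℝ)^(m+1)))
        = -(Yfun j x 0) * Real.sin ((2*(i:ℝ)+1-2*(2:ℝ)^(m-j))*π/(2:ℝ)^(m+1))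
          + Yfun j x 1 * Real.cos ((2*(i:ℝ)+1-2*(2:ℝ)^(m-j))*π/(2:ℝ)^(m+1)) := by
      intro i
      rw [dotp_eVec_pi_div_two_add]
      have earg : (2*(i:ℝ)+1 - (2:ℝ)^(m+1-j)) * π / (2:ℝ)^(m+1)
          = (2*(i:ℝ)+1-2*(2:ℝ)^(m-j))*π/(2:ℝ)^(m+1) := by
        rw [hmj, pow_succ]; ring
      rw [earg]
    have step : (∀ k : ℕ, k < 2^(m+1-(j+1)) →
        dotp (Yfun (j+1) x) (eVec (π/2 + (2*(k:ℝ)+1 - (2:ℝ)^(m+1-(j+1))) * π / (2:ℝ)^(m+1))) < t) ↔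
        (∀ k : ℕ, k < 2^(m+1-j) →
        dotp (Yfun j x) (eVec (π/2 + (2*(k:ℝ)+1 - (2:ℝ)^(m+1-j)) * π / (2:ℝ)^(m+1))) < t) := by
      constructor
      · intro h k hk
        rw [eR k]
        refine (hcore.1 ?_) k ?_
        · intro i hi
          rw [← eL i]
          exact h i (by rw [hmj2]; exact hi)
        · rw [hmj, pow_succ] at hk; omega
      · intro h k hk
        rw [eL k]
        refine (hcore.2 ?_) k (by rw [hmj2] at hk; omega)
        intro i hi
        rw [← eR i]
        exact h i (by rw [hmj, pow_succ]; omega)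
    exact step.trans (ih (by omega) x t)

lemma interior_P (m : ℕ) : interior (P m) =
    {x | ∀ k < 2 ^ (m + 1),
      x 0 * polyNormal m k 0 + x 1 * polyNormal m k 1 < Real.cos (π / (2 : ℝ) ^ (m + 1))} := by
  apply subset_antisymm
  · intro x hx k hk
    have hxP : x ∈ P m := interior_subset hx
    have hle := hxP k hk
    rcases lt_or_eq_of_le hle with h | h
    · exact h
    · exfalso
      rcases Metric.mem_nhds_iff.1 (mem_interior_iff_mem_nhds.1 hx) with ⟨ε, hε, hball⟩
      set x' : Fin 2 → ℝ := fun i => x i + (ε/2) * polyNormal m k i with hx'def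
      have hx'ball : x' ∈ Metric.ball x ε := by
        rw [Metric.mem_ball, dist_pi_lt_iff hε]
        intro i
        have habs : |polyNormal m k i| ≤ 1 := by
          fin_cases i
          · exact Real.abs_cos_le_one _
          · exact Real.abs_sin_le_one _
        rw [Real.dist_eq]
        have : x' i - x i = (ε/2) * polyNormal m k i := by rw [hx'def]; ring
        rw [this, abs_mul, abs_of_pos (by linarith : (0:ℝ) < ε/2)]
        nlinarith
      have hx'P := hball hx'ball k hk
      have hone : polyNormal m k 0 * polyNormal m k 0 + polyNormal m k 1 * polyNormal m k 1 = 1 := by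
        have h1 := Real.sin_sq_add_cos_sq (π / 2 + (2 * (k : ℝ) + 1) * π / (2 : ℝ) ^ (m + 1))
        simp only [polyNormal, Matrix.cons_val_zero, Matrix.cons_val_one, Matrix.head_cons]
        nlinarith [h1]
      have hexp : x' 0 * polyNormal m k 0 + x' 1 * polyNormal m k 1
          = (x 0 * polyNormal m k 0 + x 1 * polyNormal m k 1) + ε/2 := by
        rw [hx'def]
        simp only
        nlinarith [hone]
      rw [hexp, h] at hx'P
      linarith
  · apply interior_maximal
    · intro x hx k hk
      exact le_of_lt (hx k hk)
    · have : {x : Fin 2 → ℝ | ∀ k < 2 ^ (m + 1),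
          x 0 * polyNormal m k 0 + x 1 * polyNormal m k 1 < Real.cos (π / (2 : ℝ) ^ (m + 1))}
          = ⋂ k ∈ Finset.range (2^(m+1)), {x : Fin 2 → ℝ |
            x 0 * polyNormal m k 0 + x 1 * polyNormal m k 1 < Real.cos (π / (2 : ℝ) ^ (m + 1))} := by
        ext x
        simp [Finset.mem_range]
      rw [this]
      apply isOpen_biInter_finset
      intro k _
      apply isOpen_lt _ continuous_const
      exact ((continuous_apply 0).mul continuous_const).add
        ((continuous_apply 1).mul continuous_const)

noncomputable def enc (v : Fin 2 → ℝ) : Fin 4 → ℝ :=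
  ![max (v 0) 0, max (-(v 0)) 0, max (v 1) 0, max (-(v 1)) 0]

noncomputable def matA1 : Matrix (Fin 4) (Fin 2) ℝ :=
  Matrix.of ![![1,0], ![-1,0], ![0,1], ![0,-1]]

noncomputable def rowP (j : ℕ) : Fin 4 → ℝ :=
  ![-Real.cos (π / 2^(j+1)), -Real.cos (π / 2^(j+1)), Real.sin (π / 2^(j+1)), -Real.sin (π / 2^(j+1))]

noncomputable def rowQ (j : ℕ) : Fin 4 → ℝ :=
  ![Real.sin (π / 2^(j+1)), Real.sin (π / 2^(j+1)), Real.cos (π / 2^(j+1)), -Real.cos (π / 2^(j+1))]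

noncomputable def rowPn (j : ℕ) : Fin 4 → ℝ :=
  ![Real.cos (π / 2^(j+1)), Real.cos (π / 2^(j+1)), -Real.sin (π / 2^(j+1)), Real.sin (π / 2^(j+1))]

noncomputable def rowQn (j : ℕ) : Fin 4 → ℝ :=
  ![-Real.sin (π / 2^(j+1)), -Real.sin (π / 2^(j+1)), -Real.cos (π / 2^(j+1)), Real.cos (π / 2^(j+1))]

noncomputable def matA (j : ℕ) : Matrix (Fin 4) (Fin 4) ℝ :=
  Matrix.of ![rowP j, rowPn j, rowQ j, rowQn j]

lemma abs_eq_max_add (a : ℝ) : max a 0 + max (-a) 0 = |a| := by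
  rcases le_total a 0 with h | h
  · rw [max_eq_right h, max_eq_left (by linarith), abs_of_nonpos h]; ring
  · rw [max_eq_left h, max_eq_right (by linarith), abs_of_nonneg h]; ring

lemma self_eq_max_sub (a : ℝ) : max a 0 - max (-a) 0 = a := by
  rcases le_total a 0 with h | h
  · rw [max_eq_right h, max_eq_left (by linarith)]; ring
  · rw [max_eq_left h, max_eq_right (by linarith)]; ring

lemma hidden_eq (j : ℕ) (x : Fin 2 → ℝ) :
    mlpHidden matA1 0 matA (fun _ => 0) j x = enc (Yfun j x) := by
  induction j with
  | zero =>
    funext i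
    simp only [mlpHidden, relu, Yfun, enc]
    fin_cases i <;>
      simp [matA1, Matrix.mulVec, dotProduct, Fin.sum_univ_two]
  | succ j ih =>
    have h1 := abs_eq_max_add (Yfun j x 0)
    have h2 := self_eq_max_sub (Yfun j x 1)
    have hstep : mlpHidden matA1 0 matA (fun _ => 0) (j+1) x
        = relu ((matA j).mulVec (enc (Yfun j x)) + (0 : Fin 4 → ℝ)) := by
      rw [mlpHidden, ih]
    rw [hstep]
    funext i
    fin_cases i <;>
      simp [relu, matA, Matrix.mulVec, dotProduct, Fin.sum_univ_four, rowP, rowQ,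
        rowPn, rowQn, enc, Yfun, -Real.cos_pi_over_two_pow] <;>
      congr 1
    · linear_combination (-(Real.cos (π/2^(j+1)))) * h1 + Real.sin (π/2^(j+1)) * h2
    · linear_combination (Real.cos (π/2^(j+1))) * h1 - Real.sin (π/2^(j+1)) * h2
    · linear_combination (Real.sin (π/2^(j+1))) * h1 + Real.cos (π/2^(j+1)) * h2
    · linear_combination (-(Real.sin (π/2^(j+1)))) * h1 - Real.cos (π/2^(j+1)) * h2

/-- There is a ReLU MLP of depth `m+1` and width `4` whose output is positive
exactly on the interior of `P m`. -/
theorem efficient_deep_solution_exists (m : ℕ) (hm : 1 ≤ m) :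
    ∃ F : (Fin 2 → ℝ) → ℝ, IsReluMLP (m + 1) 4 F ∧
      ∀ x, 0 < F x ↔ x ∈ interior (P m) := by
  refine ⟨fun x => Real.cos (π / (2:ℝ)^(m+1)) - Yfun (m+1) x 1, ?_, ?_⟩
  · refine ⟨matA1, 0, matA, fun _ => 0,
      ![-Real.sin (π/2^(m+1)), -Real.sin (π/2^(m+1)),
        -Real.cos (π/2^(m+1)), Real.cos (π/2^(m+1))], Real.cos (π / (2:ℝ)^(m+1)), ?_⟩
    intro x
    have hidx : m + 1 - 1 = m := by omega
    rw [hidx, hidden_eq m x]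
    have h1 := abs_eq_max_add (Yfun m x 0)
    have h2 := self_eq_max_sub (Yfun m x 1)
    simp only [Fin.sum_univ_four, enc, Yfun, Matrix.cons_val_zero, Matrix.cons_val_one,
      Matrix.head_cons, Matrix.cons_val_two, Matrix.cons_val_three, Matrix.tail_cons]
    linear_combination (Real.sin (π/2^(m+1))) * h1 + (Real.cos (π/2^(m+1))) * h2
  · intro x
    rw [interior_P m]
    have hiff := inv_lemma m (m+1) le_rfl x (Real.cos (π / (2:ℝ)^(m+1)))
    have hL : (∀ k : ℕ, k < 2^(m+1-(m+1)) →
        dotp (Yfun (m+1) x)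
          (eVec (π/2 + (2*(k:ℝ)+1 - (2:ℝ)^(m+1-(m+1))) * π / (2:ℝ)^(m+1)))
            < Real.cos (π / (2:ℝ)^(m+1)))
        ↔ Yfun (m+1) x 1 < Real.cos (π / (2:ℝ)^(m+1)) := by
      have hz : m + 1 - (m+1) = 0 := by omega
      rw [hz]
      have hang : (π/2 + (2*((0:ℕ):ℝ)+1 - (2:ℝ)^0) * π / (2:ℝ)^(m+1)) = π/2 := by
        norm_num
      constructor
      · intro h
        have h0 := h 0 (by norm_num)
        rw [hang, dotp_eVec, Real.cos_pi_div_two, Real.sin_pi_div_two] at h0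
        simpa using h0
      · intro h k hk
        have hk0 : k = 0 := by
          have h1 : (2:ℕ)^0 = 1 := pow_zero 2
          omega
        subst hk0
        rw [hang, dotp_eVec, Real.cos_pi_div_two, Real.sin_pi_div_two]
        simpa using h
    rw [hL] at hiff
    have hmem : (x ∈ {x : Fin 2 → ℝ | ∀ k < 2 ^ (m + 1),
        x 0 * polyNormal m k 0 + x 1 * polyNormal m k 1 < Real.cos (π / (2 : ℝ) ^ (m + 1))})
        ↔ (∀ k : ℕ, k < 2^(m+1) →
          dotp x (eVec (π/2 + (2*(k:ℝ)+1) * π / (2:ℝ)^(m+1))) < Real.cos (π / (2:ℝ)^(m+1))) := by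
      rfl
    rw [hmem, ← hiff]
    constructor
    · intro h
      linarith
    · intro h
      linarith
end

section
/- Let m ≥ 1 and let F : ℝ² → ℝ be piecewise affine with N pieces. If F correctly classifies f_m, then N ≥ 2^m. -/
open Real

/-- `F` correctly classifies `f_m`: positive on the interior of `P m`,
nonpositive outside `P m`. -/
def CorrectlyClassifies (m : ℕ) (F : (Fin 2 → ℝ) → ℝ) : Prop :=
  (∀ x ∈ interior (P m), 0 < F x) ∧ ∀ x ∉ P m, F x ≤ 0

lemma inner_normal (m k j : ℕ) :
    polyNormal m k 0 * polyNormal m j 0 + polyNormal m k 1 * polyNormal m j 1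
      = Real.cos ((2 * (k : ℝ) - 2 * (j : ℝ)) * π / (2 : ℝ) ^ (m + 1)) := by
  have h : (2 * (k : ℝ) - 2 * (j : ℝ)) * π / (2 : ℝ) ^ (m + 1)
      = (π / 2 + (2 * (k : ℝ) + 1) * π / (2 : ℝ) ^ (m + 1))
        - (π / 2 + (2 * (j : ℝ) + 1) * π / (2 : ℝ) ^ (m + 1)) := by ring
  rw [h, Real.cos_sub]
  simp only [polyNormal, Matrix.cons_val_zero, Matrix.cons_val_one, Matrix.head_cons]
  try ring

lemma mem_interior_P (m : ℕ) (z : Fin 2 → ℝ)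
    (hz : ∀ k < 2 ^ (m + 1), z 0 * polyNormal m k 0 + z 1 * polyNormal m k 1
        < Real.cos (π / (2 : ℝ) ^ (m + 1))) : z ∈ interior (P m) := by
  set U : Set (Fin 2 → ℝ) :=
    ⋂ k ∈ Finset.range (2 ^ (m + 1)),
      {x | x 0 * polyNormal m k 0 + x 1 * polyNormal m k 1
        < Real.cos (π / (2 : ℝ) ^ (m + 1))} with hU
  have hUopen : IsOpen U := by
    refine isOpen_biInter_finset fun k _ => ?_
    apply isOpen_lt ?_ continuous_const
    exact ((continuous_apply 0).mul continuous_const).add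
      ((continuous_apply 1).mul continuous_const)
  have hUP : U ⊆ P m := by
    intro x hx k hk
    exact le_of_lt (Set.mem_iInter₂.mp hx k (Finset.mem_range.mpr hk))
  have hzU : z ∈ U := Set.mem_iInter₂.mpr fun k hk => hz k (Finset.mem_range.mp hk)
  exact interior_maximal hUP hUopen hzU

set_option maxHeartbeats 1000000 in
/-- A piecewise affine function with `N` pieces correctly classifying `f_m`
needs at least `2^m` pieces. -/
theorem pieces_lower_bound (m N : ℕ) (hm : 1 ≤ m) (F : (Fin 2 → ℝ) → ℝ)
    (C : Fin N → Set (Fin 2 → ℝ)) (g : Fin N → ((Fin 2 → ℝ) →ᵃ[ℝ] ℝ))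
    (hconv : ∀ i, Convex ℝ (C i)) (hcover : (⋃ i, C i) = Set.univ)
    (hagree : ∀ i, ∀ x ∈ C i, F x = g i x)
    (hcls : CorrectlyClassifies m F) :
    2 ^ m ≤ N := by
  classical
  set α := π / (2 : ℝ) ^ (m + 1) with hαdef
  have h2pos : (0 : ℝ) < (2 : ℝ) ^ (m + 1) := by positivity
  have hπ := Real.pi_pos
  have hαpos : 0 < α := by positivity
  have h4le : (4 : ℝ) ≤ (2 : ℝ) ^ (m + 1) := by
    calc (4 : ℝ) = 2 ^ 2 := by norm_num
    _ ≤ 2 ^ (m + 1) := by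
      apply pow_le_pow_right₀ (by norm_num)
      omega
  have hαle : α ≤ π / 4 := by
    rw [hαdef, div_le_div_iff₀ h2pos (by norm_num)]
    nlinarith
  have hαleπ : α ≤ π := by nlinarith
  have hcosα_pos : 0 < Real.cos α :=
    Real.cos_pos_of_mem_Ioo ⟨by linarith, by linarith⟩
  have hcosα_lt1 : Real.cos α < 1 := by
    have h := Real.strictAntiOn_cos (Set.mem_Icc.mpr ⟨le_refl 0, hπ.le⟩)
      (Set.mem_Icc.mpr ⟨hαpos.le, hαleπ⟩) hαpos
    rwa [Real.cos_zero] at h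
  set r := (1 + Real.cos α) / 2 with hrdef
  have hrpos : 0 < r := by positivity
  have hrlt1 : r < 1 := by rw [hrdef]; linarith
  have hrgt : Real.cos α < r := by rw [hrdef]; linarith
  set b : ℕ → (Fin 2 → ℝ) := fun k i => r * polyNormal m k i with hbdef
  have hself : ∀ k : ℕ,
      polyNormal m k 0 * polyNormal m k 0 + polyNormal m k 1 * polyNormal m k 1 = 1 := by
    intro k
    rw [inner_normal]
    norm_num
  have hbnot : ∀ k < 2 ^ (m + 1), b k ∉ P m := by
    intro k hk hmem
    have h1 := hmem k hk
    have hval : b k 0 * polyNormal m k 0 + b k 1 * polyNormal m k 1 = r := by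
      have h := hself k
      calc b k 0 * polyNormal m k 0 + b k 1 * polyNormal m k 1
          = r * (polyNormal m k 0 * polyNormal m k 0
              + polyNormal m k 1 * polyNormal m k 1) := by
            simp only [hbdef]; ring
        _ = r := by rw [h, mul_one]
    rw [hval] at h1
    exact absurd h1 (not_le.mpr hrgt)
  have hFb : ∀ k < 2 ^ (m + 1), F (b k) ≤ 0 := fun k hk => hcls.2 _ (hbnot k hk)
  have hex : ∀ k : Fin (2 ^ (m + 1)), ∃ i, b k ∈ C i := by
    intro k
    have : b (k : ℕ) ∈ ⋃ i, C i := by rw [hcover]; exact Set.mem_univ _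
    exact Set.mem_iUnion.mp this
  choose I hI using hex
  have hinj : Function.Injective I := by
    intro k1 k2 heq
    by_contra hne
    have hvne : (k1 : ℕ) ≠ (k2 : ℕ) := fun h => hne (Fin.ext h)
    have hb1 : b (k1 : ℕ) ∈ C (I k1) := hI k1
    have hb2 : b (k2 : ℕ) ∈ C (I k1) := by rw [heq]; exact hI k2
    set i := I k1 with hidef
    set z := ((1 : ℝ) / 2) • b (k1 : ℕ) + ((1 : ℝ) / 2) • b (k2 : ℕ) with hzdef
    have hzC : z ∈ C i :=
      hconv i hb1 hb2 (by norm_num) (by norm_num) (by norm_num)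
    -- z lies in the interior of the polygon
    have hzint : z ∈ interior (P m) := by
      apply mem_interior_P
      intro j hj
      have e1 := inner_normal m (k1 : ℕ) j
      have e2 := inner_normal m (k2 : ℕ) j
      set A1 := (2 * ((k1 : ℕ) : ℝ) - 2 * (j : ℝ)) * π / (2 : ℝ) ^ (m + 1) with hA1
      set A2 := (2 * ((k2 : ℕ) : ℝ) - 2 * (j : ℝ)) * π / (2 : ℝ) ^ (m + 1) with hA2
      have hval : z 0 * polyNormal m j 0 + z 1 * polyNormal m j 1
          = r * ((Real.cos A1 + Real.cos A2) / 2) := by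
        have : z 0 * polyNormal m j 0 + z 1 * polyNormal m j 1
            = r * (((polyNormal m (k1 : ℕ) 0 * polyNormal m j 0
                + polyNormal m (k1 : ℕ) 1 * polyNormal m j 1)
              + (polyNormal m (k2 : ℕ) 0 * polyNormal m j 0
                + polyNormal m (k2 : ℕ) 1 * polyNormal m j 1)) / 2) := by
          simp only [hzdef, hbdef, Pi.add_apply, Pi.smul_apply, smul_eq_mul]
          ring
        rw [this, e1, e2]
      rw [hval, Real.cos_add_cos]
      set s := (A1 + A2) / 2 with hs
      set t := (A1 - A2) / 2 with ht
      -- bound |cos t| ≤ cos α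
      have htval : t = (((k1 : ℕ) : ℝ) - ((k2 : ℕ) : ℝ)) * α := by
        rw [ht, hA1, hA2, hαdef]; ring
      have habs : |t| = |((k1 : ℕ) : ℝ) - ((k2 : ℕ) : ℝ)| * α := by
        rw [htval, abs_mul, abs_of_pos hαpos]
      have hd1 : (1 : ℝ) ≤ |((k1 : ℕ) : ℝ) - ((k2 : ℕ) : ℝ)| := by
        have h0 : (1 : ℤ) ≤ |((k1 : ℕ) : ℤ) - ((k2 : ℕ) : ℤ)| :=
          Int.one_le_abs (by omega)
        have : ((1 : ℤ) : ℝ) ≤ |(((k1 : ℕ) : ℤ) : ℝ) - (((k2 : ℕ) : ℤ) : ℝ)| := by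
          rw [← Int.cast_sub, ← Int.cast_abs, Int.cast_le]
          exact h0
        push_cast at this ⊢
        linarith
      have hd2 : |((k1 : ℕ) : ℝ) - ((k2 : ℕ) : ℝ)| ≤ (2 : ℝ) ^ (m + 1) - 1 := by
        have hk1 := k1.isLt
        have hk2 := k2.isLt
        have h0 : |((k1 : ℕ) : ℤ) - ((k2 : ℕ) : ℤ)| ≤ ((2 ^ (m + 1) : ℕ) : ℤ) - 1 := by
          rw [abs_le]
          constructor <;> omega
        have h1 : |(((k1 : ℕ) : ℤ) : ℝ) - (((k2 : ℕ) : ℤ) : ℝ)|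
            ≤ (((2 ^ (m + 1) : ℕ) : ℤ) : ℝ) - 1 := by
          rw [← Int.cast_sub, ← Int.cast_abs]
          exact_mod_cast h0
        push_cast at h1 ⊢
        linarith
      have htlow : α ≤ |t| := by
        rw [habs]
        nlinarith
      have hthigh : |t| ≤ π - α := by
        rw [habs]
        have : ((2 : ℝ) ^ (m + 1) - 1) * α = π - α := by
          rw [hαdef]; field_simp
        nlinarith
      have hcost : |Real.cos t| ≤ Real.cos α := by
        rw [← Real.cos_abs t]
        rw [abs_le]
        constructor
        · have h1 : Real.cos (π - α) ≤ Real.cos |t| :=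
            Real.cos_le_cos_of_nonneg_of_le_pi (abs_nonneg t) (by linarith) hthigh
          rwa [Real.cos_pi_sub] at h1
        · exact Real.cos_le_cos_of_nonneg_of_le_pi hαpos.le
            (by linarith [abs_nonneg t]) htlow
      have hcoss : |Real.cos s| ≤ 1 := Real.abs_cos_le_one s
      have h1 : 2 * Real.cos s * Real.cos t ≤ 2 * Real.cos α := by
        have : 2 * Real.cos s * Real.cos t ≤ |2 * Real.cos s * Real.cos t| :=
          le_abs_self _
        have h2 : |2 * Real.cos s * Real.cos t| = 2 * |Real.cos s| * |Real.cos t| := by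
          rw [abs_mul, abs_mul]
          norm_num
        nlinarith [abs_nonneg (Real.cos s), abs_nonneg (Real.cos t)]
      calc r * (2 * Real.cos s * Real.cos t / 2)
          ≤ r * Real.cos α := by
            apply mul_le_mul_of_nonneg_left _ hrpos.le
            linarith
        _ < Real.cos α := by nlinarith
    have hFz : 0 < F z := hcls.1 z hzint
    have hgz : F z ≤ 0 := by
      rw [hagree i z hzC, hzdef, Convex.combo_affine_apply (by norm_num)]
      have hg1 : g i (b (k1 : ℕ)) ≤ 0 := by
        rw [← hagree i _ hb1]; exact hFb _ k1.isLt
      have hg2 : g i (b (k2 : ℕ)) ≤ 0 := by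
        rw [← hagree i _ hb2]; exact hFb _ k2.isLt
      simp only [smul_eq_mul]
      linarith
    linarith
  have hcard : 2 ^ (m + 1) ≤ N := by
    have := Fintype.card_le_of_injective I hinj
    simpa using this
  calc 2 ^ m ≤ 2 ^ (m + 1) := Nat.pow_le_pow_right (by norm_num) (by omega)
    _ ≤ N := hcard
end

section
/- Every ReLU MLP of depth d ≥ 1 and width w ≥ 2 on ℝ² is piecewise affine with at most w^(2d) pieces: there exist at most w^(2d) convex sets covering ℝ² such that the network output F agrees with an affine map on each of them. -/
open Real

-- ===== auxiliary development =====
open Set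

local notation "E2" => (Fin 2 → ℝ)

/-- Zero set of a nontrivial affine functional. -/
def Zs (h : E2 →ᵃ[ℝ] ℝ) : Set E2 := {x | h x = 0 ∧ ∃ y, h y ≠ 0}

lemma affCont (h : E2 →ᵃ[ℝ] ℝ) : Continuous h :=
  h.continuous_of_finiteDimensional

lemma aff_add (h : E2 →ᵃ[ℝ] ℝ) (x v : E2) : h (x + v) = h x + h.linear v := by
  have := h.map_vadd x v
  simpa [vadd_eq_add, add_comm] using this

lemma affine_eq_zero_of_nonneg_ball (h : E2 →ᵃ[ℝ] ℝ) {q : E2} {δ : ℝ} (hδ : 0 < δ)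
    (H : ∀ y ∈ Metric.ball q δ, 0 ≤ h y) (hq : h q = 0) : ∀ y, h y = 0 := by
  have small : ∀ v : E2, ‖v‖ < δ → h.linear v = 0 := by
    intro v hv
    have h1 : 0 ≤ h.linear v := by
      have : q + v ∈ Metric.ball q δ := by
        simp [Metric.mem_ball, dist_eq_norm]
        simpa using hv
      have := H _ this
      rw [aff_add, hq] at this; linarith
    have h2 : 0 ≤ h.linear (-v) := by
      have : q + (-v) ∈ Metric.ball q δ := by
        simp [Metric.mem_ball, dist_eq_norm]
        simpa using hv
      have := H _ this
      rw [aff_add, hq] at this; linarith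
    rw [map_neg] at h2; linarith
  have lin0 : ∀ v : E2, h.linear v = 0 := by
    intro v
    rcases eq_or_ne v 0 with rfl | hv
    · simp
    · have hnv : 0 < ‖v‖ := norm_pos_iff.mpr hv
      have key : h.linear ((δ / (2 * ‖v‖)) • v) = 0 := by
        apply small
        rw [norm_smul]
        rw [Real.norm_eq_abs, abs_of_pos (by positivity)]
        rw [div_mul_eq_mul_div, mul_comm, mul_div_assoc]
        calc ‖v‖ * (δ / (2*‖v‖)) = δ/2 := by field_simp
        _ < δ := by linarith
      rw [map_smul, smul_eq_mul] at key
      have : δ / (2 * ‖v‖) ≠ 0 := by positivity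
      exact (mul_eq_zero.mp key).resolve_left this
  intro y
  have : y = q + (y - q) := by ring_nf
  rw [this, aff_add, hq, lin0, add_zero]

lemma exists_zero_openSegment (h : E2 →ᵃ[ℝ] ℝ) {x y : E2} (hx : 0 < h x) (hy : h y < 0) :
    ∃ q ∈ openSegment ℝ x y, h q = 0 := by
  set s : ℝ := h x / (h x - h y) with hs
  have hden : 0 < h x - h y := by linarith
  have hs0 : 0 < s := by positivity
  have hs1 : s < 1 := by
    rw [hs, div_lt_one hden]; linarith
  refine ⟨AffineMap.lineMap x y s, ?_, ?_⟩
  · rw [openSegment_eq_image_lineMap]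
    exact ⟨s, ⟨hs0, hs1⟩, rfl⟩
  · rw [AffineMap.apply_lineMap]
    simp only [AffineMap.lineMap_apply, vsub_eq_sub, vadd_eq_add, smul_eq_mul, hs]
    field_simp
    ring

noncomputable example (h : E2 →ᵃ[ℝ] ℝ) : E2 →ᵃ[ℝ] ℝ := -h
example (h : E2 →ᵃ[ℝ] ℝ) (x : E2) : (-h) x = - (h x) := by simp
lemma frontier_nonneg_subset (h : E2 →ᵃ[ℝ] ℝ) :
    frontier {x : E2 | 0 ≤ h x} ⊆ {x | h x = 0 ∧ ∃ y, h y ≠ 0} := by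
  intro x hx
  have hcl : IsClosed {x : E2 | 0 ≤ h x} := isClosed_le continuous_const (h.continuous_of_finiteDimensional)
  have hmem : x ∈ {x : E2 | 0 ≤ h x} := hcl.frontier_subset hx
  constructor
  · by_contra hne
    have hpos : 0 < h x := lt_of_le_of_ne hmem (Ne.symm hne)
    have hop : IsOpen {y : E2 | 0 < h y} := isOpen_lt continuous_const h.continuous_of_finiteDimensional
    have hsub : {y : E2 | 0 < h y} ⊆ interior {x : E2 | 0 ≤ h x} :=
      interior_maximal (fun y (hy : 0 < h y) => (le_of_lt hy : (0:ℝ) ≤ h y)) hop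
    rw [hcl.frontier_eq] at hx
    exact hx.2 (hsub hpos)
  · by_contra hne
    push_neg at hne
    have : {x : E2 | 0 ≤ h x} = univ := eq_univ_of_forall (fun y => by simp [hne y])
    rw [hcl.frontier_eq, this] at hx
    simp at hx

lemma exists_interior_pos {C : Set E2} (hreg : C ⊆ closure (interior C))
    (h : E2 →ᵃ[ℝ] ℝ) {x : E2} (hx : x ∈ C) (hpos : 0 < h x) :
    ∃ z ∈ interior C, 0 < h z := by
  have hop : IsOpen {y : E2 | 0 < h y} := isOpen_lt continuous_const h.continuous_of_finiteDimensional
  have hcx : x ∈ closure (interior C) := hreg hx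
  rcases mem_closure_iff.mp hcx _ hop hpos with ⟨z, hz1, hz2⟩
  exact ⟨z, hz2, hz1⟩

lemma lineMap_combo (x z : E2) (t : ℝ) :
    AffineMap.lineMap x z t = t • z + (1 - t) • x := by
  simp only [AffineMap.lineMap_apply, vsub_eq_sub, vadd_eq_add, smul_sub, sub_smul, one_smul]
  abel

lemma reg_inter_nonneg {C : Set E2} (hconv : Convex ℝ C)
    (h : E2 →ᵃ[ℝ] ℝ) {z : E2} (hz : z ∈ interior C) (hzpos : 0 < h z) :
    C ∩ {x | 0 ≤ h x} ⊆ closure (interior (C ∩ {x | 0 ≤ h x})) := by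
  rintro x ⟨hxC, hxh⟩
  have hO : IsOpen (interior C ∩ {y : E2 | 0 < h y}) :=
    isOpen_interior.inter (isOpen_lt continuous_const h.continuous_of_finiteDimensional)
  have hOsub : interior C ∩ {y : E2 | 0 < h y} ⊆ C ∩ {x | 0 ≤ h x} :=
    fun y hy => ⟨interior_subset hy.1, (le_of_lt hy.2 : (0:ℝ) ≤ h y)⟩
  have h1 : openSegment ℝ x z ⊆ interior C ∩ {y : E2 | 0 < h y} := by
    rintro q hq
    rw [openSegment_eq_image_lineMap] at hq
    rcases hq with ⟨t, ht, rfl⟩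
    constructor
    · rw [lineMap_combo]
      exact hconv.combo_interior_closure_mem_interior hz (subset_closure hxC)
        ht.1 (by linarith [ht.2]) (by ring)
    · show 0 < h (AffineMap.lineMap x z t)
      rw [AffineMap.apply_lineMap]
      simp only [AffineMap.lineMap_apply, vsub_eq_sub, vadd_eq_add, smul_eq_mul]
      obtain ⟨ht0, ht1⟩ := ht
      have hx0 : (0:ℝ) ≤ h x := hxh
      nlinarith [mul_pos ht0 hzpos, mul_nonneg (sub_nonneg.mpr ht1.le) hx0]
  have h2 : openSegment ℝ x z ⊆ interior (C ∩ {x | 0 ≤ h x}) :=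
    h1.trans (interior_maximal hOsub hO)
  have h3 : x ∈ segment ℝ x z := left_mem_segment ℝ x z
  rw [← closure_openSegment] at h3
  exact (closure_mono h2) h3

lemma vec_decomp (v : E2) : v = v 0 • (Pi.single 0 1 : Fin 2 → ℝ) + v 1 • (Pi.single 1 1 : Fin 2 → ℝ) := by
  funext j; fin_cases j <;> simp

lemma split_card_le (L : List (E2 →ᵃ[ℝ] ℝ)) (g : E2 →ᵃ[ℝ] ℝ) {n : ℕ} (C : Fin n → Set E2)
    (hcl : ∀ i, IsClosed (C i)) (hconv : ∀ i, Convex ℝ (C i))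
    (hreg : ∀ i, C i ⊆ closure (interior (C i)))
    (hdisj : ∀ i k, i ≠ k → interior (C i) ∩ interior (C k) = ∅)
    (hfr : ∀ i, frontier (C i) ⊆ ⋃ h ∈ L, Zs h)
    (hsign : ∀ i, ∀ h ∈ L, (∀ x ∈ C i, 0 ≤ h x) ∨ (∀ x ∈ C i, h x ≤ 0)) :
    Nat.card {i : Fin n // (∃ x ∈ C i, 0 < g x) ∧ ∃ x ∈ C i, g x < 0} ≤ L.length + 1 := by
  classical
  set Split : Fin n → Prop := fun i => (∃ x ∈ C i, 0 < g x) ∧ ∃ x ∈ C i, g x < 0 with hSplit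
  rcases isEmpty_or_nonempty {i : Fin n // Split i} with he | hne
  · rw [Nat.card_of_isEmpty]; omega
  obtain ⟨⟨i₀, hi₀⟩⟩ := hne
  obtain ⟨⟨xp, hxpC, hxp⟩, ⟨xm, hxmC, hxm⟩⟩ := hi₀
  -- coordinates of the linear part
  set a0 : ℝ := g.linear (Pi.single 0 1) with ha0
  set a1 : ℝ := g.linear (Pi.single 1 1) with ha1
  have hval : ∀ v : E2, g.linear v = v 0 * a0 + v 1 * a1 := by
    intro v
    conv_lhs => rw [vec_decomp v]
    rw [map_add, map_smul, map_smul, smul_eq_mul, smul_eq_mul]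
  have hnz : ¬ (a0 = 0 ∧ a1 = 0) := by
    rintro ⟨h0, h1⟩
    have hlin : ∀ v : E2, g.linear v = 0 := by intro v; rw [hval, h0, h1]; ring
    have : g xp - g xm = 0 := by
      rw [← vsub_eq_sub, ← g.linearMap_vsub]; exact hlin _
    linarith
  -- the direction of the zero line of g
  set u : E2 := ![a1, -a0] with hu
  have hu0 : u 0 = a1 := rfl
  have hu1 : u 1 = -a0 := rfl
  have hune : u ≠ 0 := by
    intro h
    apply hnz
    constructor
    · have := congrFun h 1; rw [hu1] at this; simpa using neg_eq_zero.mp (by simpa using this)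
    · have := congrFun h 0; rw [hu0] at this; simpa using this
  have hgu : g.linear u = 0 := by rw [hval, hu0, hu1]; ring
  have hspan : ∀ v : E2, g.linear v = 0 → ∃ t : ℝ, v = t • u := by
    intro v hv
    rw [hval] at hv
    rcases not_and_or.mp hnz with h0 | h1
    · refine ⟨-(v 1) / a0, ?_⟩
      funext j; fin_cases j
      · show v 0 = (-(v 1) / a0) * u 0
        rw [hu0]; field_simp; linarith [hv]
      · show v 1 = (-(v 1) / a0) * u 1
        rw [hu1]; field_simp
    · refine ⟨v 0 / a1, ?_⟩
      funext j; fin_cases j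
      · show v 0 = (v 0 / a1) * u 0
        rw [hu0]; field_simp
      · show v 1 = (v 0 / a1) * u 1
        rw [hu1]; field_simp; linarith [hv]
  -- a base point on the zero line
  obtain ⟨p, -, hp0⟩ := exists_zero_openSegment g hxp hxm
  -- parametrization of the line
  set Γ : ℝ →ᵃ[ℝ] E2 := AffineMap.lineMap p (p + u) with hΓdef
  have hΓ : ∀ t : ℝ, Γ t = p + t • u := by
    intro t
    rw [hΓdef]
    simp only [AffineMap.lineMap_apply, vsub_eq_sub, vadd_eq_add, add_sub_cancel_left]
    abel
  have hΓg : ∀ t : ℝ, g (Γ t) = 0 := by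
    intro t
    rw [hΓ, aff_add, hp0, map_smul, smul_eq_mul, hgu]; ring
  have hΓsurj : ∀ x : E2, g x = 0 → ∃ t, Γ t = x := by
    intro x hx
    have : g.linear (x - p) = 0 := by
      rw [← vsub_eq_sub, g.linearMap_vsub, hx, hp0]; simp
    obtain ⟨t, ht⟩ := hspan _ this
    exact ⟨t, by rw [hΓ]; rw [← ht]; abel⟩
  have hΓinj : Function.Injective Γ := by
    intro t s hts
    rw [hΓ, hΓ] at hts
    have : (t - s) • u = 0 := by
      have := add_left_cancel hts
      rw [sub_smul, this, sub_self]
    rcases smul_eq_zero.mp this with h | h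
    · linarith [sub_eq_zero.mp (by linarith [h] : t - s = 0)]
    · exact absurd h hune
  have hΓcont : Continuous Γ := Γ.continuous_of_finiteDimensional
  -- each split cell has an interior point on the zero line
  have hkey : ∀ i : Fin n, Split i → ∃ q, q ∈ interior (C i) ∧ g q = 0 := by
    rintro i ⟨⟨x1, hx1C, hx1⟩, ⟨x2, hx2C, hx2⟩⟩
    obtain ⟨zp, hzpI, hzp⟩ := exists_interior_pos (hreg i) g hx1C hx1
    obtain ⟨zm, hzmI, hzm⟩ := exists_interior_pos (hreg i) (-g) hx2C (by simpa using hx2)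
    have hzm' : g zm < 0 := by simpa using hzm
    obtain ⟨q, hqseg, hq0⟩ := exists_zero_openSegment g hzp hzm'
    exact ⟨q, (((hconv i).interior).openSegment_subset hzpI hzmI) hqseg, hq0⟩
  -- zero sets of the other functionals meet the line in at most one point
  have hsub : ∀ h ∈ L, (Γ ⁻¹' Zs h).Subsingleton := by
    intro h hmem t1 ht1 t2 ht2
    by_contra hne12
    have hexy : ∃ y, h y ≠ 0 := ht1.2
    have e1 : h p + t1 * h.linear u = 0 := by
      have := ht1.1
      rw [hΓ, aff_add, map_smul, smul_eq_mul] at this; linarith [this]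
    have e2 : h p + t2 * h.linear u = 0 := by
      have := ht2.1
      rw [hΓ, aff_add, map_smul, smul_eq_mul] at this; linarith [this]
    have hlu : h.linear u = 0 := by
      have ht : t1 ≠ t2 := hne12
      have : (t1 - t2) * h.linear u = 0 := by linarith
      rcases mul_eq_zero.mp this with hc | hc
      · exact absurd (by linarith : t1 = t2) ht
      · exact hc
    have hhp : h p = 0 := by rw [hlu] at e1; linarith
    have hz : ∀ x : E2, g x = 0 → h x = 0 := by
      intro x hx
      obtain ⟨t, rfl⟩ := hΓsurj x hx
      rw [hΓ, aff_add, map_smul, smul_eq_mul, hlu, hhp]; ring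
    obtain ⟨q, hqI, hq0⟩ := hkey i₀ ⟨⟨xp, hxpC, hxp⟩, ⟨xm, hxmC, hxm⟩⟩
    obtain ⟨δ, hδ, hball⟩ := Metric.isOpen_iff.mp isOpen_interior q hqI
    have hballC : Metric.ball q δ ⊆ C i₀ := hball.trans interior_subset
    have hqh : h q = 0 := hz q hq0
    obtain ⟨y, hy⟩ := hexy
    rcases hsign i₀ h hmem with hpos | hneg
    · exact hy (affine_eq_zero_of_nonneg_ball h hδ (fun z hzb => hpos z (hballC hzb)) hqh y)
    · have := affine_eq_zero_of_nonneg_ball (-h) hδ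
        (fun z hzb => by simpa using hneg z (hballC hzb)) (by simpa using hqh) y
      exact hy (by simpa using this)
  -- the traces of the interiors on the line
  set J : Fin n → Set ℝ := fun i => Γ ⁻¹' (interior (C i)) with hJdef
  have hJopen : ∀ i, IsOpen (J i) := fun i => isOpen_interior.preimage hΓcont
  have hJconv : ∀ i, Convex ℝ (J i) := fun i => ((hconv i).interior).affine_preimage Γ
  have hJne : ∀ i : Fin n, Split i → (J i).Nonempty := by
    intro i hi
    obtain ⟨q, hqI, hq0⟩ := hkey i hi
    obtain ⟨t, rfl⟩ := hΓsurj q hq0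
    exact ⟨t, hqI⟩
  have hJdisj : ∀ i k : Fin n, i ≠ k → J i ∩ J k = ∅ := by
    intro i k hik
    rw [hJdef]
    simp only [← Set.preimage_inter, hdisj i k hik, Set.preimage_empty]
  -- the frontier point at the left end
  have hfrpt : ∀ i : Fin n, Split i → BddBelow (J i) →
      Γ (sInf (J i)) ∈ frontier (C i) ∧ sInf (J i) ∉ J i := by
    intro i hi hb
    have hJn := hJne i hi
    have h1 : sInf (J i) ∈ closure (J i) := csInf_mem_closure hJn hb
    have h2 : Γ (sInf (J i)) ∈ closure (interior (C i)) := by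
      have := hΓcont.closure_preimage_subset (interior (C i)) h1
      exact this
    have h3 : Γ (sInf (J i)) ∈ closure (C i) := closure_mono interior_subset h2
    have h4 : sInf (J i) ∉ J i := by
      intro hmem
      obtain ⟨ε, hε, hballJ⟩ := Metric.isOpen_iff.mp (hJopen i) _ hmem
      have : sInf (J i) - ε/2 ∈ J i := by
        apply hballJ
        rw [Metric.mem_ball, Real.dist_eq,
          show sInf (J i) - ε/2 - sInf (J i) = -(ε/2) by ring, abs_neg,
          abs_of_pos (by linarith : (0:ℝ) < ε/2)]
        linarith
      have := csInf_le hb this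
      linarith
    exact ⟨⟨h3, h4⟩, h4⟩
  have hKex : ∀ i : {i : Fin n // Split i}, BddBelow (J i.1) →
      ∃ k : Fin L.length, Γ (sInf (J i.1)) ∈ Zs (L.get k) := by
    intro i hb
    have := (hfrpt i.1 i.2 hb).1
    have hmem := hfr i.1 this
    simp only [Set.mem_iUnion] at hmem
    obtain ⟨h, hhL, hhZ⟩ := hmem
    obtain ⟨k, hk⟩ := List.mem_iff_get.mp hhL
    exact ⟨k, by rw [hk]; exact hhZ⟩
  choose K hK using hKex
  set Φ : {i : Fin n // Split i} → Option (Fin L.length) :=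
    fun i => if hb : BddBelow (J i.1) then some (K i hb) else none with hΦdef
  have hcommon : ∀ (i j : {i : Fin n // Split i}), i ≠ j → (J i.1 ∩ J j.1) = ∅ := by
    intro i j hij
    exact hJdisj i.1 j.1 (fun h => hij (Subtype.ext h))
  have hinj : Function.Injective Φ := by
    intro i j hij
    by_contra hne'
    have hJIJ : J i.1 ∩ J j.1 = ∅ := hcommon i j hne'
    obtain ⟨x, hx⟩ := hJne i.1 i.2
    obtain ⟨y, hy⟩ := hJne j.1 j.2
    by_cases bi : BddBelow (J i.1) <;> by_cases bj : BddBelow (J j.1) <;>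
      simp only [hΦdef, bi, bj, dif_pos, dif_neg, not_false_iff] at hij
    · -- both bounded below
      have hkk : K i bi = K j bj := by
        simpa using hij
      have hzi := hK i bi
      have hzj := hK j bj
      rw [hkk] at hzi
      have haij : sInf (J i.1) = sInf (J j.1) :=
        hsub (L.get (K j bj)) (List.get_mem L _) hzi hzj
      have hai : sInf (J i.1) ∉ J i.1 := (hfrpt i.1 i.2 bi).2
      have haj' : sInf (J j.1) ∉ J j.1 := (hfrpt j.1 j.2 bj).2
      have hax : sInf (J i.1) < x := lt_of_le_of_ne (csInf_le bi hx) (fun h => hai (h ▸ hx))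
      have hay' : sInf (J j.1) < y := lt_of_le_of_ne (csInf_le bj hy) (fun h => haj' (h ▸ hy))
      have hc : sInf (J i.1) < min x y := lt_min hax (by rw [haij]; exact hay')
      have hc' : sInf (J j.1) < min x y := by rw [← haij]; exact hc
      obtain ⟨x', hx', hx'lt⟩ := exists_lt_of_csInf_lt (hJne i.1 i.2) hc
      obtain ⟨y', hy', hy'lt⟩ := exists_lt_of_csInf_lt (hJne j.1 j.2) hc'
      have hmi : min x y ∈ J i.1 :=
        ((hJconv i.1).ordConnected).out hx' hx ⟨le_of_lt hx'lt, min_le_left x y⟩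
      have hmj : min x y ∈ J j.1 :=
        ((hJconv j.1).ordConnected).out hy' hy ⟨le_of_lt hy'lt, min_le_right x y⟩
      have : min x y ∈ J i.1 ∩ J j.1 := ⟨hmi, hmj⟩
      rw [hJIJ] at this
      exact this
    · cases hij
    · cases hij
    · -- both unbounded below
      obtain ⟨zi, hzi, hzilt⟩ := not_bddBelow_iff.mp bi (min x y)
      obtain ⟨zj, hzj, hzjlt⟩ := not_bddBelow_iff.mp bj zi
      have : zi ∈ J j.1 :=
        ((hJconv j.1).ordConnected).out hzj hy ⟨le_of_lt hzjlt, le_trans (le_of_lt hzilt) (min_le_right x y)⟩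
      have : zi ∈ J i.1 ∩ J j.1 := ⟨hzi, this⟩
      rw [hJIJ] at this
      exact this
  calc Nat.card {i : Fin n // Split i} ≤ Nat.card (Option (Fin L.length)) :=
        Nat.card_le_card_of_injective Φ hinj
    _ = L.length + 1 := by simp [Nat.card_eq_fintype_card]
lemma Zs_neg (h : E2 →ᵃ[ℝ] ℝ) : Zs (-h) = Zs h := by
  unfold Zs
  ext x
  simp [neg_eq_zero]

lemma setle (h : E2 →ᵃ[ℝ] ℝ) : {x : E2 | h x ≤ 0} = {x : E2 | 0 ≤ (-h) x} := by
  ext x; simp [neg_nonneg]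

lemma signCoverList (L : List (E2 →ᵃ[ℝ] ℝ)) :
    ∃ (n : ℕ) (C : Fin n → Set E2),
      2 * n ≤ 2 + L.length * (L.length + 1) ∧
      (∀ i, IsClosed (C i)) ∧ (∀ i, Convex ℝ (C i)) ∧
      (∀ i, C i ⊆ closure (interior (C i))) ∧
      (∀ i k, i ≠ k → interior (C i) ∩ interior (C k) = ∅) ∧
      (∀ i, frontier (C i) ⊆ ⋃ h ∈ L, Zs h) ∧
      (⋃ i, C i) = Set.univ ∧
      (∀ i, ∀ h ∈ L, (∀ x ∈ C i, 0 ≤ h x) ∨ (∀ x ∈ C i, h x ≤ 0)) := by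
  induction L with
  | nil =>
    refine ⟨1, fun _ => Set.univ, by norm_num, fun _ => isClosed_univ, fun _ => convex_univ,
      fun _ => by simp, fun i k hik => absurd (Subsingleton.elim i k) hik,
      fun _ => by simp, by rw [Set.iUnion_const], fun _ h hh => absurd hh List.not_mem_nil⟩
  | cons g L ih =>
    classical
    obtain ⟨n, C, hcount, hcl, hconv, hreg, hdisj, hfr, hcov, hsign⟩ := ih
    set Split : Fin n → Prop := fun i => (∃ x ∈ C i, 0 < g x) ∧ ∃ x ∈ C i, g x < 0 with hSplitdef
    set D : (Fin n ⊕ {i : Fin n // Split i}) → Set E2 := fun j =>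
      match j with
      | Sum.inl i => if (∀ x ∈ C i, 0 ≤ g x) then C i else C i ∩ {x | g x ≤ 0}
      | Sum.inr i => C i.1 ∩ {x | 0 ≤ g x} with hDdef
    set proj : (Fin n ⊕ {i : Fin n // Split i}) → Fin n := fun j => match j with
      | Sum.inl i => i
      | Sum.inr i => i.1 with hprojdef
    have hDsub : ∀ j, D j ⊆ C (proj j) := by
      rintro (i | i) x hx
      · simp only [hDdef] at hx
        split_ifs at hx with hc
        · exact hx
        · exact hx.1
      · exact hx.1
    have hgcl : IsClosed {x : E2 | 0 ≤ g x} :=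
      isClosed_le continuous_const g.continuous_of_finiteDimensional
    have hgcl' : IsClosed {x : E2 | g x ≤ 0} :=
      isClosed_le g.continuous_of_finiteDimensional continuous_const
    have hgconv : Convex ℝ {x : E2 | 0 ≤ g x} := by
      have := (convex_Ici (0:ℝ)).affine_preimage g
      exact this
    have hgconv' : Convex ℝ {x : E2 | g x ≤ 0} := by
      have := (convex_Iic (0:ℝ)).affine_preimage g
      exact this
    -- closedness
    have hDcl : ∀ j, IsClosed (D j) := by
      rintro (i | i)
      · simp only [hDdef]
        split_ifs with hc
        · exact hcl i
        · exact (hcl i).inter hgcl'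
      · exact (hcl i.1).inter hgcl
    -- convexity
    have hDconv : ∀ j, Convex ℝ (D j) := by
      rintro (i | i)
      · simp only [hDdef]
        split_ifs with hc
        · exact hconv i
        · exact (hconv i).inter hgconv'
      · exact (hconv i.1).inter hgconv
    -- regularity
    have hDreg : ∀ j, D j ⊆ closure (interior (D j)) := by
      rintro (i | i)
      · simp only [hDdef]
        split_ifs with hc
        · exact hreg i
        · push_neg at hc
          obtain ⟨x0, hx0C, hx0⟩ := hc
          obtain ⟨z, hzI, hz⟩ := exists_interior_pos (hreg i) (-g) hx0C (by simpa using hx0)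
          have := reg_inter_nonneg (hconv i) (-g) hzI hz
          rw [← setle] at this
          exact this
      · obtain ⟨⟨x0, hx0C, hx0⟩, -⟩ := i.2
        obtain ⟨z, hzI, hz⟩ := exists_interior_pos (hreg i.1) g hx0C hx0
        exact reg_inter_nonneg (hconv i.1) g hzI hz
    -- disjoint interiors
    have hgen : ∀ (S T : Set E2) (ia ib : Fin n), ia ≠ ib → S ⊆ C ia → T ⊆ C ib →
        interior S ∩ interior T = ∅ := by
      intro S T ia ib hab hS hT
      apply Set.eq_empty_of_subset_empty
      intro x hx
      exact (hdisj ia ib hab) ▸ ⟨interior_mono hS hx.1, interior_mono hT hx.2⟩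
    have key : ∀ (i : Fin n), Split i →
        interior (C i ∩ {x | g x ≤ 0}) ∩ interior (C i ∩ {x | 0 ≤ g x}) = ∅ := by
      intro i hs
      by_contra hne
      obtain ⟨x, hx1, hx2⟩ := Set.nonempty_iff_ne_empty.mpr hne
      obtain ⟨δ1, hδ1, hb1⟩ := Metric.isOpen_iff.mp isOpen_interior x hx1
      obtain ⟨δ2, hδ2, hb2⟩ := Metric.isOpen_iff.mp isOpen_interior x hx2
      have hx0 : g x = 0 := le_antisymm ((interior_subset hx1).2) ((interior_subset hx2).2)
      have hz : ∀ y, g y = 0 := by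
        apply affine_eq_zero_of_nonneg_ball g (lt_min hδ1 hδ2) _ hx0
        intro y hy
        have : y ∈ Metric.ball x δ2 := Metric.ball_subset_ball (min_le_right δ1 δ2) hy
        exact ((interior_subset (hb2 this)).2)
      obtain ⟨⟨xp, -, hxp⟩, -⟩ := hs
      rw [hz xp] at hxp
      exact lt_irrefl 0 hxp
    have hsplit_if : ∀ (i : Fin n), Split i → D (Sum.inl i) = C i ∩ {x | g x ≤ 0} := by
      intro i hs
      obtain ⟨-, ⟨xm, hxmC, hxm⟩⟩ := hs
      simp only [hDdef]
      rw [if_neg]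
      intro hall
      linarith [hall xm hxmC]
    have hDdisj : ∀ j k, j ≠ k → interior (D j) ∩ interior (D k) = ∅ := by
      rintro (a | a) (b | b) hjk
      · exact hgen _ _ a b (fun h => hjk (by rw [h])) (hDsub (Sum.inl a)) (hDsub (Sum.inl b))
      · by_cases hab : a = b.1
        · rw [hab, hsplit_if b.1 b.2]
          exact key b.1 b.2
        · exact hgen _ _ a b.1 hab (hDsub (Sum.inl a)) (hDsub (Sum.inr b))
      · by_cases hab : a.1 = b
        · rw [Set.inter_comm, ← hab, hsplit_if a.1 a.2]
          exact key a.1 a.2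
        · exact hgen _ _ a.1 b hab (hDsub (Sum.inr a)) (hDsub (Sum.inl b))
      · have : a.1 ≠ b.1 ∨ a.1 = b.1 := ne_or_eq _ _
        rcases this with h | h
        · exact hgen _ _ a.1 b.1 h (hDsub (Sum.inr a)) (hDsub (Sum.inr b))
        · exact absurd (Subtype.ext h) (fun h' => hjk (by rw [h']))
    -- frontier
    have hfrg : frontier {x : E2 | 0 ≤ g x} ⊆ Zs g := frontier_nonneg_subset g
    have hfrg' : frontier {x : E2 | g x ≤ 0} ⊆ Zs g := by
      rw [setle, ← Zs_neg g]
      exact frontier_nonneg_subset (-g)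
    have hDfr : ∀ j, frontier (D j) ⊆ ⋃ h ∈ (g :: L), Zs h := by
      have hmono : (⋃ h ∈ L, Zs h) ⊆ ⋃ h ∈ (g :: L), Zs h := by
        apply Set.iUnion₂_subset
        intro h hh
        exact Set.subset_iUnion₂ (s := fun h _ => Zs h) h (List.mem_cons_of_mem g hh)
      have hZg : Zs g ⊆ ⋃ h ∈ (g :: L), Zs h :=
        Set.subset_iUnion₂ (s := fun h _ => Zs h) g List.mem_cons_self
      have general : ∀ (i : Fin n) (S : Set E2), frontier S ⊆ Zs g →
          frontier (C i ∩ S) ⊆ ⋃ h ∈ (g :: L), Zs h := by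
        intro i S hS x hx
        rcases frontier_inter_subset (C i) S hx with h | h
        · exact hmono ((hfr i) h.1)
        · exact hZg (hS h.2)
      rintro (i | i)
      · simp only [hDdef]
        split_ifs with hc
        · exact (hfr i).trans hmono
        · exact general i _ hfrg'
      · exact general i.1 _ hfrg
    -- cover
    have hDcov : (⋃ j, D j) = Set.univ := by
      apply Set.eq_univ_of_forall
      intro x
      have hx : x ∈ ⋃ i, C i := hcov ▸ Set.mem_univ x
      obtain ⟨i, hi⟩ := Set.mem_iUnion.mp hx
      rw [Set.mem_iUnion]
      by_cases hall : ∀ y ∈ C i, 0 ≤ g y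
      · exact ⟨Sum.inl i, by simp only [hDdef]; rw [if_pos hall]; exact hi⟩
      · by_cases hxg : g x ≤ 0
        · exact ⟨Sum.inl i, by simp only [hDdef]; rw [if_neg hall]; exact ⟨hi, hxg⟩⟩
        · push_neg at hall hxg
          obtain ⟨xm, hxmC, hxm⟩ := hall
          exact ⟨Sum.inr ⟨i, ⟨x, hi, hxg⟩, ⟨xm, hxmC, hxm⟩⟩, ⟨hi, le_of_lt hxg⟩⟩
    -- signs
    have hDsign : ∀ j, ∀ h ∈ (g :: L), (∀ x ∈ D j, 0 ≤ h x) ∨ (∀ x ∈ D j, h x ≤ 0) := by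
      intro j h hh
      rcases List.mem_cons.mp hh with rfl | hhL
      · match j with
        | Sum.inl i =>
          simp only [hDdef]
          split_ifs with hc
          · exact Or.inl hc
          · exact Or.inr (fun x hx => hx.2)
        | Sum.inr i => exact Or.inl (fun x hx => hx.2)
      · rcases hsign (proj j) h hhL with hc | hc
        · exact Or.inl (fun x hx => hc x (hDsub j hx))
        · exact Or.inr (fun x hx => hc x (hDsub j hx))
    -- counting
    have hsplitcard : Nat.card {i : Fin n // Split i} ≤ L.length + 1 :=
      split_card_le L g C hcl hconv hreg hdisj hfr hsign
    haveI : Fintype {i : Fin n // Split i} := Fintype.ofFinite _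
    set n' := n + Fintype.card {i : Fin n // Split i} with hn'def
    have e : (Fin n ⊕ {i : Fin n // Split i}) ≃ Fin n' :=
      (Equiv.sumCongr (Equiv.refl (Fin n)) (Fintype.equivFin _)).trans finSumFinEquiv
    have hcard : 2 * n' ≤ 2 + (g :: L).length * ((g :: L).length + 1) := by
      have h2 : Fintype.card {i : Fin n // Split i} ≤ L.length + 1 := by
        rw [← Nat.card_eq_fintype_card]
        exact hsplitcard
      have h3 : (g :: L).length = L.length + 1 := rfl
      set m := L.length
      have h4 : (m + 1) * (m + 1 + 1) = m * (m + 1) + 2 * (m + 1) := by ring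
      rw [h3, h4]
      omega
    refine ⟨n', fun i => D (e.symm i), hcard, fun i => hDcl _, fun i => hDconv _,
      fun i => hDreg _, fun i k hik => hDdisj _ _ (fun h => hik (by simpa using e.symm.injective h)),
      fun i => hDfr _, ?_, fun i => hDsign _⟩
    rw [← hDcov]
    exact e.symm.surjective.iUnion_comp D

lemma signCoverFin {w : ℕ} (hw : 2 ≤ w) (f : Fin w → (E2 →ᵃ[ℝ] ℝ)) :
    ∃ C : Fin (w ^ 2) → Set E2, (∀ i, Convex ℝ (C i)) ∧ (⋃ i, C i) = Set.univ ∧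
      ∀ i j, (∀ x ∈ C i, 0 ≤ f j x) ∨ (∀ x ∈ C i, f j x ≤ 0) := by
  classical
  obtain ⟨n, C, hcount, -, hconv, -, -, -, hcov, hsign⟩ := signCoverList (List.ofFn f)
  have hlen : (List.ofFn f).length = w := List.length_ofFn
  have hn : n ≤ w ^ 2 := by
    rw [hlen] at hcount
    have h1 : 2 * w ≤ w * w := Nat.mul_le_mul_right w hw
    have h2 : w * (w + 1) = w * w + w := by ring
    rw [h2] at hcount
    rw [pow_two]
    omega
  refine ⟨fun i => if h : (i : ℕ) < n then C ⟨i, h⟩ else ∅, ?_, ?_, ?_⟩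
  · intro i; dsimp only; split_ifs; exacts [hconv _, convex_empty]
  · apply Set.eq_univ_of_forall
    intro x
    obtain ⟨i, hi⟩ := Set.mem_iUnion.mp (hcov ▸ Set.mem_univ x)
    rw [Set.mem_iUnion]
    refine ⟨⟨i, lt_of_lt_of_le i.2 hn⟩, ?_⟩
    dsimp only
    rw [dif_pos i.2]
    exact hi
  · intro i j
    dsimp only
    by_cases h : (i:ℕ) < n
    · rw [dif_pos h]
      exact hsign ⟨i, h⟩ (f j) (List.mem_ofFn.mpr ⟨j, rfl⟩)
    · rw [dif_neg h]
      exact Or.inl (fun x hx => absurd hx (Set.notMem_empty x))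

noncomputable def matAff {a b : ℕ} (M : Matrix (Fin a) (Fin b) ℝ) (bb : Fin a → ℝ) :
    (Fin b → ℝ) →ᵃ[ℝ] (Fin a → ℝ) where
  toFun := fun x => M.mulVec x + bb
  linear := M.mulVecLin
  map_vadd' := by
    intro p v
    simp only [vadd_eq_add, Matrix.mulVecLin_apply, Matrix.mulVec_add]
    abel

lemma matAff_apply {a b : ℕ} (M : Matrix (Fin a) (Fin b) ℝ) (bb : Fin a → ℝ) (x : Fin b → ℝ) :
    matAff M bb x = M.mulVec x + bb := rfl

lemma layerCover {w : ℕ} (hw : 2 ≤ w) (A1 : Matrix (Fin w) (Fin 2) ℝ) (b1 : Fin w → ℝ)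
    (A : ℕ → Matrix (Fin w) (Fin w) ℝ) (b : ℕ → Fin w → ℝ) :
    ∀ k : ℕ, ∃ N : ℕ, N ≤ w ^ (2 * (k + 1)) ∧
      ∃ (C : Fin N → Set E2) (φ : Fin N → (E2 →ᵃ[ℝ] (Fin w → ℝ))),
        (∀ i, Convex ℝ (C i)) ∧ (⋃ i, C i) = Set.univ ∧
        ∀ i, ∀ x ∈ C i, mlpHidden A1 b1 A b k x = φ i x := by
  classical
  intro k
  induction k with
  | zero =>
    set Φ0 := matAff A1 b1 with hΦ0
    set f : Fin w → (E2 →ᵃ[ℝ] ℝ) :=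
      fun j => ((LinearMap.proj j : (Fin w → ℝ) →ₗ[ℝ] ℝ).toAffineMap).comp Φ0 with hf
    obtain ⟨C, hconv, hcov, hsign⟩ := signCoverFin hw f
    refine ⟨w ^ 2, by norm_num, C, ?_, hconv, hcov, ?_⟩
    · exact fun i => AffineMap.pi (fun j =>
        if (∀ x ∈ C i, 0 ≤ f j x) then f j else 0)
    · intro i x hx
      show relu (A1.mulVec x + b1) = _
      funext j
      have hfx : f j x = (A1.mulVec x + b1) j := rfl
      rw [AffineMap.pi_apply]
      by_cases h : ∀ x ∈ C i, 0 ≤ f j x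
      · rw [if_pos h]
        show max ((A1.mulVec x + b1) j) 0 = f j x
        rw [hfx]
        exact max_eq_left (hfx ▸ h x hx)
      · rw [if_neg h]
        have hle : ∀ y ∈ C i, f j y ≤ 0 := (hsign i j).resolve_left h
        show max ((A1.mulVec x + b1) j) 0 = (0 : E2 →ᵃ[ℝ] ℝ) x
        have : (A1.mulVec x + b1) j ≤ 0 := hfx ▸ hle x hx
        have h0 : (0 : E2 →ᵃ[ℝ] ℝ) x = 0 := rfl
        rw [h0]
        exact max_eq_right this
  | succ k ih =>
    obtain ⟨N, hN, C, φ, hconv, hcov, hagree⟩ := ih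
    set Ψ : Fin N → (E2 →ᵃ[ℝ] (Fin w → ℝ)) :=
      fun i => (matAff (A k) (b k)).comp (φ i) with hΨ
    set f : Fin N → Fin w → (E2 →ᵃ[ℝ] ℝ) :=
      fun i j => ((LinearMap.proj j : (Fin w → ℝ) →ₗ[ℝ] ℝ).toAffineMap).comp (Ψ i) with hfdef
    choose D hDconv hDcov hDsign using fun i => signCoverFin hw (f i)
    set e := (finProdFinEquiv : Fin N × Fin (w ^ 2) ≃ Fin (N * w ^ 2)) with he
    refine ⟨N * w ^ 2, ?_, ?_, ?_, ?_, ?_, ?_⟩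
    · calc N * w ^ 2 ≤ w ^ (2 * (k + 1)) * w ^ 2 := Nat.mul_le_mul_right _ hN
        _ = w ^ (2 * (k + 1) + 2) := (pow_add w _ 2).symm
        _ = w ^ (2 * (k + 1 + 1)) := by ring_nf
    · exact fun p => C (e.symm p).1 ∩ D (e.symm p).1 (e.symm p).2
    · exact fun p => AffineMap.pi (fun j =>
        if (∀ x ∈ D (e.symm p).1 (e.symm p).2, 0 ≤ f (e.symm p).1 j x)
        then f (e.symm p).1 j else 0)
    · exact fun p => (hconv _).inter (hDconv _ _)
    · apply Set.eq_univ_of_forall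
      intro x
      obtain ⟨i, hi⟩ := Set.mem_iUnion.mp (hcov ▸ Set.mem_univ x)
      obtain ⟨l, hl⟩ := Set.mem_iUnion.mp ((hDcov i) ▸ Set.mem_univ x)
      rw [Set.mem_iUnion]
      refine ⟨e (i, l), ?_⟩
      simp only [Equiv.symm_apply_apply]
      exact ⟨hi, hl⟩
    · rintro p x ⟨hxC, hxD⟩
      set i := (e.symm p).1
      set l := (e.symm p).2
      show relu ((A k).mulVec (mlpHidden A1 b1 A b k x) + b k) = _
      have hΨx : (A k).mulVec (mlpHidden A1 b1 A b k x) + b k = Ψ i x := by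
        rw [hΨ]
        show _ = matAff (A k) (b k) (φ i x)
        rw [matAff_apply, hagree i x hxC]
      funext j
      have hfx : f i j x = ((A k).mulVec (mlpHidden A1 b1 A b k x) + b k) j := by
        rw [hΨx]; rfl
      rw [AffineMap.pi_apply]
      by_cases h : ∀ y ∈ D i l, 0 ≤ f i j y
      · rw [if_pos h]
        show max (((A k).mulVec (mlpHidden A1 b1 A b k x) + b k) j) 0 = f i j x
        rw [hfx]
        exact max_eq_left (hfx ▸ h x hxD)
      · rw [if_neg h]
        have hle : ∀ y ∈ D i l, f i j y ≤ 0 := (hDsign i l j).resolve_left h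
        show max (((A k).mulVec (mlpHidden A1 b1 A b k x) + b k) j) 0 = (0 : E2 →ᵃ[ℝ] ℝ) x
        have : ((A k).mulVec (mlpHidden A1 b1 A b k x) + b k) j ≤ 0 := hfx ▸ hle x hxD
        have h0 : (0 : E2 →ᵃ[ℝ] ℝ) x = 0 := rfl
        rw [h0]
        exact max_eq_right this

noncomputable def finalAff {w : ℕ} (v : Fin w → ℝ) (c : ℝ) : (Fin w → ℝ) →ᵃ[ℝ] ℝ where
  toFun := fun z => (∑ j, v j * z j) + c
  linear :=
    { toFun := fun z => ∑ j, v j * z j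
      map_add' := by
        intro z z'
        simp only [Pi.add_apply, mul_add]
        rw [Finset.sum_add_distrib]
      map_smul' := by
        intro r z
        simp only [Pi.smul_apply, smul_eq_mul, RingHom.id_apply]
        rw [Finset.mul_sum]
        congr 1
        funext j
        ring }
  map_vadd' := by
    intro p z
    simp only [vadd_eq_add, Pi.add_apply, mul_add, LinearMap.coe_mk, AddHom.coe_mk]
    rw [Finset.sum_add_distrib]
    ring


/-- Every ReLU MLP of depth `d ≥ 1` and width `w ≥ 2` on `ℝ²` is piecewise affine
with at most `w^(2d)` pieces. -/
theorem mlp_pieces_upper_bound (d w : ℕ) (hd : 1 ≤ d) (hw : 2 ≤ w)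
    (F : (Fin 2 → ℝ) → ℝ) (hF : IsReluMLP d w F) :
    ∃ (N : ℕ), N ≤ w ^ (2 * d) ∧
      ∃ (C : Fin N → Set (Fin 2 → ℝ)) (g : Fin N → ((Fin 2 → ℝ) →ᵃ[ℝ] ℝ)),
        (∀ i, Convex ℝ (C i)) ∧ (⋃ i, C i) = Set.univ ∧
        ∀ i, ∀ x ∈ C i, F x = g i x := by
  obtain ⟨A1, b1, A, b, v, c, hFeq⟩ := hF
  obtain ⟨N, hN, C, φ, hconv, hcov, hagree⟩ := layerCover hw A1 b1 A b (d - 1)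
  have hd' : d - 1 + 1 = d := Nat.succ_pred_eq_of_pos hd
  rw [hd'] at hN
  refine ⟨N, hN, C, fun i => (finalAff v c).comp (φ i), hconv, hcov, ?_⟩
  intro i x hx
  rw [hFeq x]
  show (∑ j, v j * mlpHidden A1 b1 A b (d - 1) x j) + c = finalAff v c (φ i x)
  rw [← hagree i x hx]
  rfl
end

section
/- If a ReLU MLP of depth d ≥ 1 and width w ≥ 2 correctly classifies f_m, then w^(2d) ≥ 2^m. -/
open Real

namespace WDT

def pats {E : Type*} {n : ℕ} (f : Fin n → E → ℝ) (S : Set E) : Set (Fin n → Bool) :=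
  {p | ∃ x ∈ S, ∀ j, p j = decide (0 ≤ f j x)}

lemma neg_combo {px py α β : ℝ} (hα : 0 ≤ α) (hβ : 0 ≤ β) (hs : α + β = 1)
    (hx : px < 0) (hy : py < 0) : α * px + β * py < 0 := by
  rcases eq_or_lt_of_le hα with h | h
  · have : β = 1 := by linarith
    rw [← h, this]; linarith
  · have h1 : α * px < 0 := mul_neg_of_pos_of_neg h hx
    have h2 : β * py ≤ 0 := mul_nonpos_of_nonneg_of_nonpos hβ hy.le
    linarith

lemma sign_combo {l : Bool} {px py α β : ℝ} (hα : 0 ≤ α) (hβ : 0 ≤ β) (hs : α + β = 1)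
    (h1 : decide (0 ≤ px) = l) (h2 : decide (0 ≤ py) = l) :
    decide (0 ≤ α * px + β * py) = l := by
  cases l with
  | true =>
    have hx : 0 ≤ px := by simpa using h1
    have hy : 0 ≤ py := by simpa using h2
    simp [add_nonneg (mul_nonneg hα hx) (mul_nonneg hβ hy)]
  | false =>
    have hx : px < 0 := by simpa using h1
    have hy : py < 0 := by simpa using h2
    simp [not_le.mpr (neg_combo hα hβ hs hx hy)]

/-- generic counting step -/
lemma pats_step {E : Type*} {n : ℕ} (f : Fin (n+1) → E → ℝ) (S : Set E) :
    (pats f S).ncard ≤ (pats (fun j => f j.succ) S).ncard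
      + {l : Fin n → Bool | Fin.cons true l ∈ pats f S ∧ Fin.cons false l ∈ pats f S}.ncard := by
  classical
  set Q := pats (fun j => f j.succ) S with hQ
  set L := {l : Fin n → Bool | Fin.cons true l ∈ pats f S ∧ Fin.cons false l ∈ pats f S} with hL
  set T : Set ((Fin n → Bool) ⊕ (Fin n → Bool)) := (Sum.inl '' Q) ∪ (Sum.inr '' L) with hT
  have htail : ∀ p ∈ pats f S, Fin.tail p ∈ Q := by
    rintro p ⟨x, hx, hp⟩
    exact ⟨x, hx, fun j => hp j.succ⟩
  let φ : (Fin (n+1) → Bool) → ((Fin n → Bool) ⊕ (Fin n → Bool)) := fun p =>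
    if p 0 = true then Sum.inl (Fin.tail p)
    else if Fin.cons true (Fin.tail p) ∈ pats f S then Sum.inr (Fin.tail p)
    else Sum.inl (Fin.tail p)
  have hmaps : ∀ p ∈ pats f S, φ p ∈ T := by
    intro p hp
    by_cases h0 : p 0 = true
    · simp only [φ, h0, if_true]
      exact Or.inl ⟨_, htail p hp, rfl⟩
    · have h0' : p 0 = false := by simpa using h0
      by_cases h1 : Fin.cons true (Fin.tail p) ∈ pats f S
      · simp only [φ, h0, if_false, h1, if_true]
        refine Or.inr ⟨_, ⟨h1, ?_⟩, rfl⟩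
        have hp' : Fin.cons false (Fin.tail p) = p := by
          rw [← h0']; exact Fin.cons_self_tail p
        rwa [hp']
      · simp only [φ, h0, if_false, h1, if_false]
        exact Or.inl ⟨_, htail p hp, rfl⟩
  have hinj : Set.InjOn φ (pats f S) := by
    intro p hp p' hp' heq
    have htl : Fin.tail p = Fin.tail p' := by
      simp only [φ] at heq
      split_ifs at heq with a b c d e <;> simp_all
    have h00 : p 0 = p' 0 := by
      by_contra hne
      -- one is true, other false
      have hcases : (p 0 = true ∧ p' 0 = false) ∨ (p 0 = false ∧ p' 0 = true) := by
        cases hb : p 0 <;> cases hb' : p' 0 <;> simp_all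
      -- wlog style: both cases symmetric
      have key : ∀ a a' : Fin (n+1) → Bool, a ∈ pats f S → a' ∈ pats f S → φ a = φ a' →
          Fin.tail a = Fin.tail a' → a 0 = true → a' 0 = false → False := by
        intro a a' ha ha' heq htl' ha0 ha0'
        simp only [φ, ha0, if_true] at heq
        have ha0'' : ¬ (a' 0 = true) := by simp [ha0']
        simp only [ha0'', if_false] at heq
        by_cases hc : Fin.cons true (Fin.tail a') ∈ pats f S
        · simp [hc] at heq
        · simp [hc] at heq
          -- heq : Fin.tail a = Fin.tail a'; but hc says cons true (tail a') ∉ pats; yet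
          -- a = cons true (tail a) = cons true (tail a') ∈ pats
          apply hc
          rw [← htl']
          have : Fin.cons true (Fin.tail a) = a := by rw [← ha0]; exact Fin.cons_self_tail a
          rwa [this]
      rcases hcases with ⟨h1, h2⟩ | ⟨h1, h2⟩
      · exact key p p' hp hp' heq htl h1 h2
      · exact key p' p hp' hp heq.symm htl.symm h2 h1
    have := Fin.cons_self_tail p
    rw [← this, ← Fin.cons_self_tail p', h00, htl]
  have hTfin : T.Finite := ((Set.toFinite Q).image _).union ((Set.toFinite L).image _)
  calc (pats f S).ncard ≤ T.ncard := Set.ncard_le_ncard_of_injOn φ hmaps hinj hTfin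
    _ ≤ (Sum.inl '' Q).ncard + (Sum.inr '' L).ncard := Set.ncard_union_le _ _
    _ ≤ Q.ncard + L.ncard := by
        gcongr
        · exact Set.ncard_image_le (Set.toFinite Q)
        · exact Set.ncard_image_le (Set.toFinite L)


lemma pats_ncard_le_card {E : Type*} {n : ℕ} (f : Fin n → E → ℝ) (S : Set E) :
    (pats f S).ncard ≤ Fintype.card (Fin n → Bool) := by
  have h := Set.ncard_le_ncard (Set.subset_univ (pats f S)) (Set.toFinite _)
  simpa [Set.ncard_univ, Nat.card_eq_fintype_card] using h

/-- extract witnesses from split membership -/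
lemma split_witness {E : Type*} {n : ℕ} {f : Fin (n+1) → E → ℝ} {S : Set E}
    {l : Fin n → Bool} (h1 : Fin.cons true l ∈ pats f S) (h2 : Fin.cons false l ∈ pats f S) :
    ∃ x ∈ S, ∃ y ∈ S, 0 ≤ f 0 x ∧ f 0 y < 0 ∧
      (∀ j : Fin n, l j = decide (0 ≤ f j.succ x)) ∧
      (∀ j : Fin n, l j = decide (0 ≤ f j.succ y)) := by
  obtain ⟨x, hx, hpx⟩ := h1
  obtain ⟨y, hy, hpy⟩ := h2
  refine ⟨x, hx, y, hy, ?_, ?_, ?_, ?_⟩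
  · have := hpx 0; simp only [Fin.cons_zero] at this
    exact of_decide_eq_true this.symm
  · have := hpy 0; simp only [Fin.cons_zero] at this
    have := of_decide_eq_false this.symm
    exact not_le.mp this
  · intro j; have := hpx j.succ; simpa [Fin.cons_succ] using this
  · intro j; have := hpy j.succ; simpa [Fin.cons_succ] using this

lemma pats_card_dim1 : ∀ (n : ℕ) (f : Fin n → ℝ → ℝ),
    (∀ j, ∃ a c, ∀ t, f j t = a * t + c) → ∀ (S : Set ℝ), Convex ℝ S →
    (pats f S).ncard ≤ n + 1 := by
  intro n
  induction n with
  | zero =>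
    intro f _ S _
    have := pats_ncard_le_card f S
    simpa using this
  | succ n ih =>
    intro f haff S hS
    have step := pats_step f S
    set L := {l : Fin n → Bool | Fin.cons true l ∈ pats f S ∧ Fin.cons false l ∈ pats f S} with hL
    have hQ : (pats (fun j => f j.succ) S).ncard ≤ n + 1 :=
      ih _ (fun j => haff j.succ) S hS
    have hLcard : L.ncard ≤ 1 := by
      rcases Set.eq_empty_or_nonempty L with he | ⟨l₀, hl₀⟩
      · simp [he]
      · obtain ⟨a, c, hac⟩ := haff 0
        -- a ≠ 0
        obtain ⟨x₀, _, y₀, _, hx₀, hy₀, _, _⟩ := split_witness hl₀.1 hl₀.2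
        have ha : a ≠ 0 := by
          intro h
          rw [hac x₀, h] at hx₀
          rw [hac y₀, h] at hy₀
          simp at hx₀ hy₀
          linarith
        set t₀ : ℝ := -c / a with ht₀
        have hsub : L ⊆ {fun j => decide (0 ≤ f j.succ t₀)} := by
          intro l hl
          obtain ⟨x, hx, y, hy, hfx, hfy, hlx, hly⟩ := split_witness hl.1 hl.2
          set θ : ℝ := f 0 x / (f 0 x - f 0 y) with hθ
          have hden : 0 < f 0 x - f 0 y := by linarith
          have hθ0 : 0 ≤ θ := div_nonneg hfx hden.le
          have hθ1 : θ ≤ 1 := by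
            rw [hθ, div_le_one hden]; linarith
          set z : ℝ := (1 - θ) * x + θ * y with hz
          have hcombo : ∀ j : Fin (n+1), f j z = (1 - θ) * f j x + θ * f j y := by
            intro j
            obtain ⟨a', c', h'⟩ := haff j
            rw [h', h', h', hz]; ring
          have hfz : f 0 z = 0 := by
            rw [hcombo 0, hθ]
            field_simp
            ring
          have hzt : z = t₀ := by
            have := hac z
            rw [hfz] at this
            rw [ht₀]
            field_simp
            linarith
          have : l = fun j => decide (0 ≤ f j.succ z) := by
            funext j
            have hsc : decide (0 ≤ (1 - θ) * f j.succ x + θ * f j.succ y) = l j :=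
              sign_combo (by linarith) hθ0 (by ring) (hlx j).symm (hly j).symm
            rw [hcombo j.succ]
            exact hsc.symm
          simp only [Set.mem_singleton_iff]
          rw [this, hzt]
        calc L.ncard ≤ ({fun j => decide (0 ≤ f j.succ t₀)} : Set (Fin n → Bool)).ncard :=
              Set.ncard_le_ncard hsub (Set.toFinite _)
          _ = 1 := Set.ncard_singleton _
    omega


/-- Affine predicate on the plane. -/
def IsAff2 (g : (Fin 2 → ℝ) → ℝ) : Prop := ∃ a0 a1 cst, ∀ x, g x = a0 * x 0 + a1 * x 1 + cst

lemma pats_card_dim2 : ∀ (n : ℕ) (f : Fin n → (Fin 2 → ℝ) → ℝ),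
    (∀ j, IsAff2 (f j)) → ∀ (S : Set (Fin 2 → ℝ)), Convex ℝ S →
    2 * (pats f S).ncard ≤ n * n + n + 2 := by
  intro n
  induction n with
  | zero =>
    intro f _ S _
    have := pats_ncard_le_card f S
    have h1 : (pats f S).ncard ≤ 1 := by simpa using this
    omega
  | succ n ih =>
    intro f haff S hS
    have step := pats_step f S
    set L := {l : Fin n → Bool | Fin.cons true l ∈ pats f S ∧ Fin.cons false l ∈ pats f S} with hL
    have hQ : 2 * (pats (fun j => f j.succ) S).ncard ≤ n * n + n + 2 :=
      ih _ (fun j => haff j.succ) S hS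
    have hLcard : L.ncard ≤ n + 1 := by
      rcases Set.eq_empty_or_nonempty L with he | ⟨l₀, hl₀⟩
      · simp [he]
      · obtain ⟨a0, a1, cst, hac⟩ := haff 0
        obtain ⟨x₀, _, y₀, _, hx₀, hy₀, _, _⟩ := split_witness hl₀.1 hl₀.2
        have ha : ¬ (a0 = 0 ∧ a1 = 0) := by
          rintro ⟨h0, h1⟩
          rw [hac x₀, h0, h1] at hx₀
          rw [hac y₀, h0, h1] at hy₀
          simp at hx₀ hy₀
          linarith
        set qn : ℝ := a0 ^ 2 + a1 ^ 2 with hqn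
        have hqnpos : 0 < qn := by
          rcases not_and_or.mp ha with h | h
          · positivity
          · positivity
        -- base point on the line {f 0 = 0}
        set w₀ : Fin 2 → ℝ := ![-cst * a0 / qn, -cst * a1 / qn] with hw₀
        -- parametrization of the line
        set φ : ℝ → (Fin 2 → ℝ) := fun t => ![w₀ 0 - a1 * t, w₀ 1 + a0 * t] with hφ
        -- restricted functions are affine in t
        have haff1 : ∀ j : Fin n, ∃ a c, ∀ t, f j.succ (φ t) = a * t + c := by
          intro j
          obtain ⟨b0, b1, e, hb⟩ := haff j.succ
          exact ⟨b1 * a0 - b0 * a1, b0 * (w₀ 0) + b1 * (w₀ 1) + e, fun t => by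
            rw [hb]; simp [hφ]; ring⟩
        have hconv : Convex ℝ (φ ⁻¹' S) := by
          intro t1 ht1 t2 ht2 α β hα hβ hs
          have hkey : φ (α * t1 + β * t2) = α • (φ t1) + β • (φ t2) := by
            funext i
            fin_cases i
            · show w₀ 0 - a1 * (α * t1 + β * t2) = α * (w₀ 0 - a1 * t1) + β * (w₀ 0 - a1 * t2)
              linear_combination (-(w₀ 0)) * hs
            · show w₀ 1 + a0 * (α * t1 + β * t2) = α * (w₀ 1 + a0 * t1) + β * (w₀ 1 + a0 * t2)
              linear_combination (-(w₀ 1)) * hs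
          simp only [Set.mem_preimage] at *
          rw [smul_eq_mul, smul_eq_mul, hkey]
          exact hS ht1 ht2 hα hβ hs
        have hsub : L ⊆ pats (fun (j : Fin n) => fun t => f j.succ (φ t)) (φ ⁻¹' S) := by
          intro l hl
          obtain ⟨x, hx, y, hy, hfx, hfy, hlx, hly⟩ := split_witness hl.1 hl.2
          set θ : ℝ := f 0 x / (f 0 x - f 0 y) with hθ
          have hden : 0 < f 0 x - f 0 y := by linarith
          have hθ0 : 0 ≤ θ := div_nonneg hfx hden.le
          have hθ1 : θ ≤ 1 := by rw [hθ, div_le_one hden]; linarith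
          set z : Fin 2 → ℝ := (1 - θ) • x + θ • y with hz
          have hzS : z ∈ S := hS hx hy (by linarith) hθ0 (by ring)
          have hzc : ∀ i : Fin 2, z i = (1 - θ) * x i + θ * y i := by
            intro i; simp [hz]
          have hcombo : ∀ j : Fin (n+1), f j z = (1 - θ) * f j x + θ * f j y := by
            intro j
            obtain ⟨b0, b1, e, hb⟩ := haff j
            rw [hb, hb, hb, hzc 0, hzc 1]; ring
          have hfz : f 0 z = 0 := by
            rw [hcombo 0, hθ]; field_simp; ring
          -- solve for t with φ t = z
          set t : ℝ := (a0 * (z 1 - w₀ 1) - a1 * (z 0 - w₀ 0)) / qn with htdef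
          have hline : a0 * z 0 + a1 * z 1 + cst = 0 := by
            have := hac z; rw [this] at hfz; linarith
          have hφt : φ t = z := by
            have h : qn ≠ 0 := ne_of_gt hqnpos
            have hw0 : w₀ 0 = -cst * a0 / qn := by simp [hw₀]
            have hw1 : w₀ 1 = -cst * a1 / qn := by simp [hw₀]
            have hwq0 : w₀ 0 * qn = -cst * a0 := by rw [hw0]; field_simp
            have hwq1 : w₀ 1 * qn = -cst * a1 := by rw [hw1]; field_simp
            have htq : t * qn = a0 * (z 1 - w₀ 1) - a1 * (z 0 - w₀ 0) := by
              rw [htdef]; field_simp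
            funext i
            fin_cases i
            · show w₀ 0 - a1 * t = z 0
              have key : qn^2 * (w₀ 0 - a1*t) = qn^2 * (z 0) := by
                linear_combination (qn - a1^2) * hwq0 + (a0*a1) * hwq1 + (-(a1)*qn) * htq
                  + (-(a0)*qn) * hline + (-(qn)*(z 0)) * hqn
              exact mul_left_cancel₀ (pow_ne_zero 2 h) key
            · show w₀ 1 + a0 * t = z 1
              have key : qn^2 * (w₀ 1 + a0*t) = qn^2 * (z 1) := by
                linear_combination (a0*a1) * hwq0 + (qn - a0^2) * hwq1 + (a0*qn) * htq
                  + (-(a1)*qn) * hline + (-(qn)*(z 1)) * hqn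
              exact mul_left_cancel₀ (pow_ne_zero 2 h) key
          refine ⟨t, ?_, ?_⟩
          · simp only [Set.mem_preimage]; rw [hφt]; exact hzS
          · intro j
            show l j = decide (0 ≤ f j.succ (φ t))
            rw [hφt, hcombo j.succ]
            exact (sign_combo (by linarith) hθ0 (by ring) (hlx j).symm (hly j).symm).symm
        calc L.ncard ≤ (pats (fun (j : Fin n) => fun t => f j.succ (φ t)) (φ ⁻¹' S)).ncard :=
              Set.ncard_le_ncard hsub (Set.toFinite _)
          _ ≤ n + 1 := pats_card_dim1 n _ haff1 _ hconv
    -- combine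
    have h2 : 2 * (pats f S).ncard ≤ 2 * (pats (fun j => f j.succ) S).ncard + 2 * L.ncard := by omega
    have : 2 * (pats f S).ncard ≤ n * n + n + 2 + 2 * (n + 1) := by omega
    have hgoal : n * n + n + 2 + 2 * (n + 1) = (n+1) * (n+1) + (n+1) + 2 := by ring
    omega


variable {w : ℕ} (A1 : Matrix (Fin w) (Fin 2) ℝ) (b1 : Fin w → ℝ)
  (A : ℕ → Matrix (Fin w) (Fin w) ℝ) (b : ℕ → Fin w → ℝ)

/-- pre-activations of layer `i` (layer index starting at 0) -/
noncomputable def preAct : ℕ → (Fin 2 → ℝ) → (Fin w → ℝ)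
  | 0, x => A1.mulVec x + b1
  | (i+1), x => (A i).mulVec (relu (preAct i x)) + b i

lemma mlpHidden_eq_relu_preAct : ∀ (i : ℕ) (x), mlpHidden A1 b1 A b i x = relu (preAct A1 b1 A b i x) := by
  intro i
  induction i with
  | zero => intro x; rfl
  | succ i ih => intro x; show relu _ = relu _; rw [ih x]; rfl

/-- activation pattern -/
noncomputable def patB (x : Fin 2 → ℝ) (i : ℕ) (j : Fin w) : Bool :=
  decide (0 ≤ preAct A1 b1 A b i x j)

/-- the 0/1 diagonal mask of layer `i` of pattern `q` -/
noncomputable def maskq (q : ℕ → Fin w → Bool) (i : ℕ) : Matrix (Fin w) (Fin w) ℝ :=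
  Matrix.diagonal (fun j => if q i j then (1:ℝ) else 0)

noncomputable def Mq (q : ℕ → Fin w → Bool) : ℕ → Matrix (Fin w) (Fin 2) ℝ
  | 0 => A1
  | (i+1) => (A i * maskq q i) * Mq q i

noncomputable def Kq (q : ℕ → Fin w → Bool) : ℕ → (Fin w → ℝ)
  | 0 => b1
  | (i+1) => (A i * maskq q i).mulVec (Kq q i) + b i

/-- On the region where the pattern below `i` agrees with `q`, `preAct i` is affine. -/
lemma preAct_eq_affine (q : ℕ → Fin w → Bool) :
    ∀ (i : ℕ) (x), (∀ k < i, ∀ j, patB A1 b1 A b x k j = q k j) →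
      preAct A1 b1 A b i x = (Mq A1 A q i).mulVec x + Kq b1 A b q i := by
  intro i
  induction i with
  | zero => intro x _; rfl
  | succ i ih =>
    intro x hx
    have hrelu : relu (preAct A1 b1 A b i x) = (maskq q i).mulVec (preAct A1 b1 A b i x) := by
      funext j
      have hm : (maskq q i).mulVec (preAct A1 b1 A b i x) j
          = (if q i j then (1:ℝ) else 0) * preAct A1 b1 A b i x j := by
        simp [maskq, Matrix.mulVec_diagonal]
      have hpat : patB A1 b1 A b x i j = q i j := hx i (Nat.lt_succ_self i) j
      rw [hm]
      cases hq : q i j with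
      | true =>
        have : (0:ℝ) ≤ preAct A1 b1 A b i x j := by
          have := hpat; rw [hq] at this
          exact of_decide_eq_true this
        simp [relu, max_eq_left this, this]
      | false =>
        have : preAct A1 b1 A b i x j < 0 := by
          have := hpat; rw [hq] at this
          exact not_le.mp (of_decide_eq_false this)
        simp [relu, max_eq_right this.le, this.le]
    show (A i).mulVec (relu (preAct A1 b1 A b i x)) + b i = _
    rw [hrelu, ih x (fun k hk => hx k (Nat.lt_succ_of_lt hk))]
    rw [Matrix.mulVec_add, Matrix.mulVec_mulVec, Matrix.mulVec_add, Matrix.mulVec_mulVec, Matrix.mulVec_mulVec]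
    show _ = ((A i * maskq q i) * Mq A1 A q i).mulVec x
      + ((A i * maskq q i).mulVec (Kq b1 A b q i) + b i)
    rw [← Matrix.mul_assoc]
    abel

/-- the region of a fixed pattern (below level i) is convex -/
lemma region_convex (q : ℕ → Fin w → Bool) (i : ℕ) :
    Convex ℝ {x | ∀ k < i, ∀ j, patB A1 b1 A b x k j = q k j} := by
  intro x hx y hy α β hα hβ hs
  simp only [Set.mem_setOf_eq] at *
  intro k hk
  -- strong induction on k
  induction k using Nat.strong_induction_on with
  | _ k ihk =>
    intro j
    have hz : ∀ k' < k, ∀ j, patB A1 b1 A b (α • x + β • y) k' j = q k' j := by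
      intro k' hk' j'
      exact ihk k' hk' (lt_trans hk' hk) j'
    have hpz := preAct_eq_affine A1 b1 A b q k _ hz
    have hpx := preAct_eq_affine A1 b1 A b q k x (fun k' hk' => hx k' (lt_trans hk' hk))
    have hpy := preAct_eq_affine A1 b1 A b q k y (fun k' hk' => hy k' (lt_trans hk' hk))
    have hval : preAct A1 b1 A b k (α • x + β • y) j
        = α * preAct A1 b1 A b k x j + β * preAct A1 b1 A b k y j := by
      rw [hpz, hpx, hpy]
      rw [Matrix.mulVec_add, Matrix.mulVec_smul, Matrix.mulVec_smul]
      simp only [Pi.add_apply, Pi.smul_apply, smul_eq_mul]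
      have : α * ((Mq A1 A q k).mulVec x j + Kq b1 A b q k j)
          + β * ((Mq A1 A q k).mulVec y j + Kq b1 A b q k j)
          = α * (Mq A1 A q k).mulVec x j + β * (Mq A1 A q k).mulVec y j
            + (α + β) * Kq b1 A b q k j := by ring
      rw [this, hs]; ring
    show decide (0 ≤ preAct A1 b1 A b k (α • x + β • y) j) = q k j
    rw [hval]
    exact sign_combo hα hβ hs
      (by rw [← hx k hk j]; rfl) (by rw [← hy k hk j]; rfl)


/-- coefficients of the affine form of `F` on a region -/
noncomputable def nuq (v : Fin w → ℝ) (q : ℕ → Fin w → Bool) (i : ℕ) : Fin 2 → ℝ :=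
  fun cth => ∑ j, v j * (if q i j then Mq A1 A q i j cth else 0)

noncomputable def tauq (v : Fin w → ℝ) (c : ℝ) (q : ℕ → Fin w → Bool) (i : ℕ) : ℝ :=
  (∑ j, v j * (if q i j then Kq b1 A b q i j else 0)) + c

lemma F_eq_on_region (v : Fin w → ℝ) (c : ℝ) (d : ℕ) (hd : 1 ≤ d)
    (F : (Fin 2 → ℝ) → ℝ)
    (hFeq : ∀ x, F x = (∑ j, v j * mlpHidden A1 b1 A b (d - 1) x j) + c)
    (q : ℕ → Fin w → Bool) (x : Fin 2 → ℝ)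
    (hx : ∀ k < d, ∀ j, patB A1 b1 A b x k j = q k j) :
    F x = nuq A1 A v q (d-1) 0 * x 0 + nuq A1 A v q (d-1) 1 * x 1 + tauq b1 A b v c q (d-1) := by
  have hd1 : d - 1 < d := by omega
  have haffine := preAct_eq_affine A1 b1 A b q (d-1) x (fun k hk => hx k (lt_of_lt_of_le hk (by omega)))
  have hterm : ∀ j, v j * mlpHidden A1 b1 A b (d-1) x j
      = (v j * (if q (d-1) j then Mq A1 A q (d-1) j 0 else 0)) * x 0
        + (v j * (if q (d-1) j then Mq A1 A q (d-1) j 1 else 0)) * x 1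
        + v j * (if q (d-1) j then Kq b1 A b q (d-1) j else 0) := by
    intro j
    rw [mlpHidden_eq_relu_preAct]
    have hpat : patB A1 b1 A b x (d-1) j = q (d-1) j := hx (d-1) hd1 j
    cases hq : q (d-1) j with
    | true =>
      have hge : (0:ℝ) ≤ preAct A1 b1 A b (d-1) x j := by
        have := hpat; rw [hq] at this; exact of_decide_eq_true this
      have : relu (preAct A1 b1 A b (d-1) x) j = preAct A1 b1 A b (d-1) x j := by
        simp [relu, max_eq_left hge]
      rw [this, haffine]
      simp only [Pi.add_apply, Matrix.mulVec, dotProduct, Fin.sum_univ_two, if_true]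
      ring
    | false =>
      have hlt : preAct A1 b1 A b (d-1) x j < 0 := by
        have := hpat; rw [hq] at this; exact not_le.mp (of_decide_eq_false this)
      have : relu (preAct A1 b1 A b (d-1) x) j = 0 := by
        simp [relu, max_eq_right hlt.le]
      rw [this]
      simp
  rw [hFeq]
  rw [Finset.sum_congr rfl (fun j _ => hterm j)]
  rw [Finset.sum_add_distrib, Finset.sum_add_distrib, ← Finset.sum_mul, ← Finset.sum_mul]
  simp only [nuq, tauq]
  ring

lemma continuous_preAct : ∀ i, Continuous (fun x => preAct A1 b1 A b i x) := by
  intro i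
  induction i with
  | zero =>
    apply continuous_pi
    intro j
    simp only [preAct, Pi.add_apply, Matrix.mulVec, dotProduct]
    exact (continuous_finset_sum _ fun k _ => continuous_const.mul (continuous_apply k)).add
      continuous_const
  | succ i ih =>
    apply continuous_pi
    intro j
    show Continuous fun x => (A i).mulVec (relu (preAct A1 b1 A b i x)) j + b i j
    simp only [Matrix.mulVec, dotProduct]
    refine Continuous.add (continuous_finset_sum _ fun k _ => continuous_const.mul ?_) continuous_const
    show Continuous fun x => max (preAct A1 b1 A b i x k) 0
    exact ((continuous_apply k).comp ih).max continuous_const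

lemma continuous_F (v : Fin w → ℝ) (c : ℝ) (d : ℕ)
    (F : (Fin 2 → ℝ) → ℝ)
    (hFeq : ∀ x, F x = (∑ j, v j * mlpHidden A1 b1 A b (d - 1) x j) + c) :
    Continuous F := by
  have : F = fun x => (∑ j, v j * mlpHidden A1 b1 A b (d - 1) x j) + c := funext hFeq
  rw [this]
  refine Continuous.add (continuous_finset_sum _ fun j _ => continuous_const.mul ?_) continuous_const
  rw [show (fun x => mlpHidden A1 b1 A b (d-1) x j) = fun x => max (preAct A1 b1 A b (d-1) x j) 0 by
    funext x; rw [mlpHidden_eq_relu_preAct]; rfl]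
  exact ((continuous_apply j).comp (continuous_preAct A1 b1 A b (d-1))).max continuous_const

/-- truncated pattern -/
noncomputable def patFin (i : ℕ) (x : Fin 2 → ℝ) : Fin i → Fin w → Bool :=
  fun k j => patB A1 b1 A b x k j

def extq {i : ℕ} (q : Fin i → Fin w → Bool) : ℕ → Fin w → Bool :=
  fun k j => if h : k < i then q ⟨k, h⟩ j else false

lemma patFin_eq_iff (i : ℕ) (x : Fin 2 → ℝ) (q : Fin i → Fin w → Bool) :
    patFin A1 b1 A b i x = q ↔ ∀ k < i, ∀ j, patB A1 b1 A b x k j = extq q k j := by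
  constructor
  · intro h k hk j
    simp only [extq, dif_pos hk]
    have := congrFun (congrFun h ⟨k, hk⟩) j
    exact this
  · intro h
    funext k j
    have := h k.1 k.2 j
    simp only [extq] at this
    rw [dif_pos k.2] at this
    exact this

lemma range_patFin_card (hw : 2 ≤ w) : ∀ i : ℕ,
    (Set.range (patFin A1 b1 A b i)).ncard ≤ (w*w)^i := by
  intro i
  induction i with
  | zero =>
    have h : (Set.range (patFin A1 b1 A b 0)).ncard ≤ (Set.univ : Set (Fin 0 → Fin w → Bool)).ncard :=
      Set.ncard_le_ncard (Set.subset_univ _) (Set.toFinite _)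
    simpa [Set.ncard_univ, Nat.card_eq_fintype_card] using h
  | succ i ih =>
    classical
    set Sq : (Fin i → Fin w → Bool) → Set (Fin 2 → ℝ) := fun q => {x | patFin A1 b1 A b i x = q}
      with hSq
    set fq : (Fin i → Fin w → Bool) → Fin w → (Fin 2 → ℝ) → ℝ := fun q j x =>
      Mq A1 A (extq q) i j 0 * x 0 + Mq A1 A (extq q) i j 1 * x 1 + Kq b1 A b (extq q) i j
      with hfq
    set snocq : (Fin i → Fin w → Bool) → (Fin w → Bool) → (Fin (i+1) → Fin w → Bool) :=
      fun q s k j => if h : (k : ℕ) < i then q ⟨k, h⟩ j else s j with hsnocq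
    set PiF : Finset (Fin i → Fin w → Bool) := (Set.toFinite (Set.range (patFin A1 b1 A b i))).toFinset
      with hPiF
    set T : Finset (Fin (i+1) → Fin w → Bool) :=
      PiF.biUnion (fun q => ((Set.toFinite (pats (fq q) (Sq q))).toFinset).image (snocq q)) with hT
    have hsub : Set.range (patFin A1 b1 A b (i+1)) ⊆ ↑T := by
      rintro r ⟨x, rfl⟩
      set q : Fin i → Fin w → Bool := patFin A1 b1 A b i x with hq
      have hxS : x ∈ Sq q := by simp [hSq, hq]
      have hxreg : ∀ k < i, ∀ j, patB A1 b1 A b x k j = extq q k j :=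
        (patFin_eq_iff A1 b1 A b i x q).mp rfl
      have haffi := preAct_eq_affine A1 b1 A b (extq q) i x hxreg
      set s : Fin w → Bool := fun j => patB A1 b1 A b x i j with hs
      have hsmem : s ∈ pats (fq q) (Sq q) := by
        refine ⟨x, hxS, fun j => ?_⟩
        show patB A1 b1 A b x i j = _
        have : fq q j x = preAct A1 b1 A b i x j := by
          rw [haffi]
          simp only [hfq, Pi.add_apply, Matrix.mulVec, dotProduct, Fin.sum_univ_two]
        rw [this]
        rfl
      have hr : patFin A1 b1 A b (i+1) x = snocq q s := by
        funext k j
        by_cases hk : (k : ℕ) < i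
        · simp only [hsnocq, dif_pos hk]
          show patB A1 b1 A b x k j = _
          rw [hxreg k hk j]
          simp [extq, dif_pos hk]
        · have hki : (k : ℕ) = i := by omega
          simp only [hsnocq, dif_neg hk]
          show patB A1 b1 A b x k j = patB A1 b1 A b x i j
          rw [hki]
      have hqPiF : q ∈ PiF := (Set.Finite.mem_toFinset _).mpr ⟨x, rfl⟩
      have hsFin : s ∈ (Set.toFinite (pats (fq q) (Sq q))).toFinset :=
        (Set.Finite.mem_toFinset _).mpr hsmem
      have : patFin A1 b1 A b (i+1) x ∈ T :=
        Finset.mem_biUnion.mpr ⟨q, hqPiF, Finset.mem_image.mpr ⟨s, hsFin, hr.symm⟩⟩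
      exact this
    have hcard1 : (Set.range (patFin A1 b1 A b (i+1))).ncard ≤ T.card := by
      have := Set.ncard_le_ncard hsub (T.finite_toSet)
      rwa [Set.ncard_coe_finset] at this
    have hpatsbound : ∀ q : Fin i → Fin w → Bool,
        ((Set.toFinite (pats (fq q) (Sq q))).toFinset).card ≤ w * w := by
      intro q
      have hconv : Convex ℝ (Sq q) := by
        have : Sq q = {x | ∀ k < i, ∀ j, patB A1 b1 A b x k j = extq q k j} := by
          ext x; exact patFin_eq_iff A1 b1 A b i x q
        rw [this]
        exact region_convex A1 b1 A b (extq q) i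
      have haff : ∀ j, IsAff2 (fq q j) := fun j =>
        ⟨Mq A1 A (extq q) i j 0, Mq A1 A (extq q) i j 1, Kq b1 A b (extq q) i j, fun x => rfl⟩
      have h2 := pats_card_dim2 w (fq q) haff (Sq q) hconv
      have hcardeq : ((Set.toFinite (pats (fq q) (Sq q))).toFinset).card = (pats (fq q) (Sq q)).ncard :=
        (Set.ncard_eq_toFinset_card _ _).symm
      rw [hcardeq]
      nlinarith [h2, hw]
    have hTcard : T.card ≤ PiF.card * (w * w) := by
      calc T.card ≤ ∑ q ∈ PiF, (((Set.toFinite (pats (fq q) (Sq q))).toFinset).image (snocq q)).card :=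
            Finset.card_biUnion_le
        _ ≤ ∑ q ∈ PiF, (w * w) := Finset.sum_le_sum (fun q _ =>
            le_trans Finset.card_image_le (hpatsbound q))
        _ = PiF.card * (w * w) := by rw [Finset.sum_const, smul_eq_mul]
    have hPiFcard : PiF.card ≤ (w*w)^i := by
      have : PiF.card = (Set.range (patFin A1 b1 A b i)).ncard :=
        (Set.ncard_eq_toFinset_card _ _).symm
      omega
    calc (Set.range (patFin A1 b1 A b (i+1))).ncard ≤ T.card := hcard1
      _ ≤ PiF.card * (w * w) := hTcard
      _ ≤ (w*w)^i * (w*w) := Nat.mul_le_mul_right _ hPiFcard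
      _ = (w*w)^(i+1) := (pow_succ (w*w) i).symm


lemma tripleSin (A B : ℝ) :
    sin (2*A) + sin (2*B) - sin (2*(A+B)) = 4 * sin A * sin B * sin (A+B) := by
  have h1 := sin_sq_add_cos_sq A
  have h2 := sin_sq_add_cos_sq B
  have e1 : (2:ℝ)*(A+B) = 2*A + 2*B := by ring
  rw [e1, sin_add (2*A) (2*B), sin_two_mul A, sin_two_mul B, cos_two_mul A, cos_two_mul B,
    sin_add A B]
  linear_combination (-(4:ℝ) * sin A * cos A) * h2 + (-(4:ℝ) * sin B * cos B) * h1

lemma sin_lb {η x : ℝ} (hη : 0 < η) (hη2 : η ≤ π/2) (h1 : η ≤ x) (h2 : x ≤ π - η) :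
    sin η ≤ sin x := by
  rcases le_or_gt x (π/2) with h | h
  · have := Real.strictMonoOn_sin.monotoneOn (a := η) (b := x)
      ⟨by linarith [pi_pos], hη2⟩ ⟨by linarith [pi_pos], h⟩ h1
    exact this
  · rw [← Real.sin_pi_sub x]
    have := Real.strictMonoOn_sin.monotoneOn (a := η) (b := π - x)
      ⟨by linarith [pi_pos], hη2⟩ ⟨by linarith [pi_pos], by linarith⟩ (by linarith)
    exact this

set_option maxHeartbeats 1000000 in
/-- core geometric impossibility: three edge midpoints near one line -/
lemma no_three_near (m : ℕ) (hm : 1 ≤ m) (a b c : ℕ) (hab : a < b) (hbc : b < c)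
    (hc : c < 2^(m+1)) (ν0 ν1 τ : ℝ) (hν : ¬(ν0 = 0 ∧ ν1 = 0))
    (ha' : |ν0 * (Real.cos (π / (2:ℝ)^(m+1)) * polyNormal m a 0)
        + ν1 * (Real.cos (π / (2:ℝ)^(m+1)) * polyNormal m a 1) + τ|
        ≤ (|ν0| + |ν1|) * (Real.cos (π / (2:ℝ)^(m+1)) * (Real.sin (π / (2:ℝ)^(m+1)))^3 / 8))
    (hb' : |ν0 * (Real.cos (π / (2:ℝ)^(m+1)) * polyNormal m b 0)
        + ν1 * (Real.cos (π / (2:ℝ)^(m+1)) * polyNormal m b 1) + τ|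
        ≤ (|ν0| + |ν1|) * (Real.cos (π / (2:ℝ)^(m+1)) * (Real.sin (π / (2:ℝ)^(m+1)))^3 / 8))
    (hc' : |ν0 * (Real.cos (π / (2:ℝ)^(m+1)) * polyNormal m c 0)
        + ν1 * (Real.cos (π / (2:ℝ)^(m+1)) * polyNormal m c 1) + τ|
        ≤ (|ν0| + |ν1|) * (Real.cos (π / (2:ℝ)^(m+1)) * (Real.sin (π / (2:ℝ)^(m+1)))^3 / 8)) :
    False := by
  set η : ℝ := π / (2:ℝ)^(m+1) with hηdef
  have h2pow : (4:ℝ) ≤ (2:ℝ)^(m+1) := by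
    calc (4:ℝ) = (2:ℝ)^2 := by norm_num
    _ ≤ (2:ℝ)^(m+1) := by
        apply pow_le_pow_right₀ (by norm_num)
        omega
  have h2powpos : (0:ℝ) < (2:ℝ)^(m+1) := by positivity
  have hηpos : 0 < η := by
    apply div_pos pi_pos h2powpos
  have hη4 : η ≤ π/4 := by
    rw [hηdef, div_le_div_iff₀ h2powpos (by norm_num)]
    have := mul_le_mul_of_nonneg_left h2pow pi_pos.le
    linarith
  have hη2 : η < π/2 := by linarith [pi_pos]
  set s : ℝ := Real.sin η with hsdef
  set r : ℝ := Real.cos η with hrdef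
  have hs : 0 < s := Real.sin_pos_of_pos_of_lt_pi hηpos (by linarith [pi_pos])
  have hs1 : s ≤ 1 := Real.sin_le_one η
  have hr : 0 < r := Real.cos_pos_of_mem_Ioo ⟨by linarith [pi_pos], hη2⟩
  -- angles
  set θ : ℕ → ℝ := fun k => π / 2 + (2 * (k:ℝ) + 1) * π / (2:ℝ)^(m+1) with hθdef
  have hpn0 : ∀ k, polyNormal m k 0 = Real.cos (θ k) := fun k => rfl
  have hpn1 : ∀ k, polyNormal m k 1 = Real.sin (θ k) := fun k => rfl
  set δm : ℝ := r * s^3 / 8 with hδdef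
  set E : ℝ := (|ν0| + |ν1|) * δm with hEdef
  have hnν : 0 < |ν0| + |ν1| := by
    rcases not_and_or.mp hν with h | h
    · have := abs_pos.mpr h; positivity
    · have := abs_pos.mpr h
      have h0 : 0 ≤ |ν0| := abs_nonneg _
      linarith
  -- pairwise bounds
  have pair : ∀ u v : ℕ,
      |ν0 * (r * Real.cos (θ u)) + ν1 * (r * Real.sin (θ u)) + τ| ≤ E →
      |ν0 * (r * Real.cos (θ v)) + ν1 * (r * Real.sin (θ v)) + τ| ≤ E →
      |ν0 * r * (Real.cos (θ u) - Real.cos (θ v)) + ν1 * r * (Real.sin (θ u) - Real.sin (θ v))| ≤ 2 * E := by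
    intro u v hu hv
    have key : ν0 * r * (Real.cos (θ u) - Real.cos (θ v)) + ν1 * r * (Real.sin (θ u) - Real.sin (θ v))
        = (ν0 * (r * Real.cos (θ u)) + ν1 * (r * Real.sin (θ u)) + τ)
          - (ν0 * (r * Real.cos (θ v)) + ν1 * (r * Real.sin (θ v)) + τ) := by ring
    rw [key]
    calc |_ - _| ≤ _ + _ := abs_sub _ _
      _ ≤ 2 * E := by linarith
  have ha'' : |ν0 * (r * Real.cos (θ a)) + ν1 * (r * Real.sin (θ a)) + τ| ≤ E := by
    rw [hEdef, hδdef]; rw [hpn0, hpn1] at ha'; exact ha'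
  have hb'' : |ν0 * (r * Real.cos (θ b)) + ν1 * (r * Real.sin (θ b)) + τ| ≤ E := by
    rw [hEdef, hδdef]; rw [hpn0, hpn1] at hb'; exact hb'
  have hc'' : |ν0 * (r * Real.cos (θ c)) + ν1 * (r * Real.sin (θ c)) + τ| ≤ E := by
    rw [hEdef, hδdef]; rw [hpn0, hpn1] at hc'; exact hc'
  set v10 : ℝ := Real.cos (θ b) - Real.cos (θ a) with hv10
  set v11 : ℝ := Real.sin (θ b) - Real.sin (θ a) with hv11
  set v20 : ℝ := Real.cos (θ c) - Real.cos (θ a) with hv20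
  set v21 : ℝ := Real.sin (θ c) - Real.sin (θ a) with hv21
  set D : ℝ := v10 * v21 - v11 * v20 with hD
  have h1 := pair b a hb'' ha''
  have h2 := pair c a hc'' ha''
  have hv10b : |v10| ≤ 2 := by
    rw [hv10]
    calc |Real.cos (θ b) - Real.cos (θ a)| ≤ |Real.cos (θ b)| + |Real.cos (θ a)| := abs_sub _ _
      _ ≤ 2 := by
          have := Real.abs_cos_le_one (θ b); have := Real.abs_cos_le_one (θ a); linarith
  have hv11b : |v11| ≤ 2 := by
    rw [hv11]
    calc |Real.sin (θ b) - Real.sin (θ a)| ≤ |Real.sin (θ b)| + |Real.sin (θ a)| := abs_sub _ _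
      _ ≤ 2 := by
          have := Real.abs_sin_le_one (θ b); have := Real.abs_sin_le_one (θ a); linarith
  have hv20b : |v20| ≤ 2 := by
    rw [hv20]
    calc |Real.cos (θ c) - Real.cos (θ a)| ≤ |Real.cos (θ c)| + |Real.cos (θ a)| := abs_sub _ _
      _ ≤ 2 := by
          have := Real.abs_cos_le_one (θ c); have := Real.abs_cos_le_one (θ a); linarith
  have hv21b : |v21| ≤ 2 := by
    rw [hv21]
    calc |Real.sin (θ c) - Real.sin (θ a)| ≤ |Real.sin (θ c)| + |Real.sin (θ a)| := abs_sub _ _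
      _ ≤ 2 := by
          have := Real.abs_sin_le_one (θ c); have := Real.abs_sin_le_one (θ a); linarith
  set W1 : ℝ := ν0 * r * v10 + ν1 * r * v11 with hW1
  set W2 : ℝ := ν0 * r * v20 + ν1 * r * v21 with hW2
  have hW1b : |W1| ≤ 2 * E := by rw [hW1, hv10, hv11]; exact h1
  have hW2b : |W2| ≤ 2 * E := by rw [hW2, hv20, hv21]; exact h2
  have hid0 : r * D * ν0 = W1 * v21 - W2 * v11 := by rw [hW1, hW2, hD]; ring
  have hid1 : r * D * ν1 = W2 * v10 - W1 * v20 := by rw [hW1, hW2, hD]; ring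
  have hEnn : 0 ≤ E := by
    rw [hEdef, hδdef]; positivity
  have hb0 : r * |D| * |ν0| ≤ 8 * E := by
    have : |r * D * ν0| = r * |D| * |ν0| := by
      rw [abs_mul, abs_mul, abs_of_pos hr]
    rw [← this, hid0]
    calc |W1 * v21 - W2 * v11| ≤ |W1 * v21| + |W2 * v11| := abs_sub _ _
      _ = |W1| * |v21| + |W2| * |v11| := by rw [abs_mul, abs_mul]
      _ ≤ (2*E) * 2 + (2*E) * 2 := by
          apply add_le_add
          · exact mul_le_mul hW1b hv21b (abs_nonneg _) (by linarith)
          · exact mul_le_mul hW2b hv11b (abs_nonneg _) (by linarith)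
      _ = 8 * E := by ring
  have hb1 : r * |D| * |ν1| ≤ 8 * E := by
    have : |r * D * ν1| = r * |D| * |ν1| := by
      rw [abs_mul, abs_mul, abs_of_pos hr]
    rw [← this, hid1]
    calc |W2 * v10 - W1 * v20| ≤ |W2 * v10| + |W1 * v20| := abs_sub _ _
      _ = |W2| * |v10| + |W1| * |v20| := by rw [abs_mul, abs_mul]
      _ ≤ (2*E) * 2 + (2*E) * 2 := by
          apply add_le_add
          · exact mul_le_mul hW2b hv10b (abs_nonneg _) (by linarith)
          · exact mul_le_mul hW1b hv20b (abs_nonneg _) (by linarith)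
      _ = 8 * E := by ring
  have hsum : r * |D| * (|ν0| + |ν1|) ≤ 16 * E := by
    have he : r * |D| * (|ν0| + |ν1|) = r * |D| * |ν0| + r * |D| * |ν1| := by ring
    linarith [hb0, hb1, he.le, he.ge]
  have h16 : (16:ℝ) * E = (2 * s^3) * (r * (|ν0| + |ν1|)) := by
    rw [hEdef, hδdef]; ring
  have hDb : |D| ≤ 2 * s^3 := by
    have hsum2 : |D| * (r * (|ν0| + |ν1|)) ≤ (2 * s^3) * (r * (|ν0| + |ν1|)) := by
      calc |D| * (r * (|ν0| + |ν1|)) = r * |D| * (|ν0| + |ν1|) := by ring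
        _ ≤ 16 * E := hsum
        _ = (2 * s^3) * (r * (|ν0| + |ν1|)) := h16
    exact le_of_mul_le_mul_right hsum2 (by positivity)
  -- lower bound for D
  have hDexp : D = Real.sin (θ b - θ a) + Real.sin (θ c - θ b) - Real.sin (θ c - θ a) := by
    rw [hD, hv10, hv11, hv20, hv21, Real.sin_sub, Real.sin_sub, Real.sin_sub]
    ring
  have hcastba : ((b - a : ℕ) : ℝ) = (b:ℝ) - (a:ℝ) := by
    push_cast [Nat.cast_sub hab.le]; ring
  have hcastcb : ((c - b : ℕ) : ℝ) = (c:ℝ) - (b:ℝ) := by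
    push_cast [Nat.cast_sub hbc.le]; ring
  set Aν : ℝ := ((b - a : ℕ) : ℝ) * η with hAdef
  set Bν : ℝ := ((c - b : ℕ) : ℝ) * η with hBdef
  have hθba : θ b - θ a = 2 * Aν := by
    rw [hθdef, hAdef, hcastba, hηdef]; ring
  have hθcb : θ c - θ b = 2 * Bν := by
    rw [hθdef, hBdef, hcastcb, hηdef]; ring
  have hθca : θ c - θ a = 2 * (Aν + Bν) := by
    rw [hθdef, hAdef, hBdef, hcastba, hcastcb, hηdef]; ring
  have hDtrig : D = 4 * Real.sin Aν * Real.sin Bν * Real.sin (Aν + Bν) := by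
    rw [hDexp, hθba, hθcb, hθca]
    exact tripleSin Aν Bν
  have hqη : (2:ℝ)^(m+1) * η = π := by
    rw [hηdef]; field_simp
  -- bounds on Aν, Bν, Aν+Bν
  have hba1 : (1:ℝ) ≤ ((b - a : ℕ) : ℝ) := by
    have : 1 ≤ b - a := by omega
    exact_mod_cast this
  have hcb1 : (1:ℝ) ≤ ((c - b : ℕ) : ℝ) := by
    have : 1 ≤ c - b := by omega
    exact_mod_cast this
  have hbaub : ((b - a : ℕ) : ℝ) ≤ (2:ℝ)^(m+1) - 1 := by
    have h1 : (b - a : ℕ) ≤ 2^(m+1) - 1 := by omega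
    have h2 : ((b - a : ℕ) : ℝ) ≤ ((2^(m+1) - 1 : ℕ) : ℝ) := by exact_mod_cast h1
    have h3 : ((2^(m+1) - 1 : ℕ) : ℝ) = (2:ℝ)^(m+1) - 1 := by
      push_cast [Nat.cast_sub (Nat.one_le_two_pow)]
      ring
    linarith
  have hsumub : ((b - a : ℕ) : ℝ) + ((c - b : ℕ) : ℝ) ≤ (2:ℝ)^(m+1) - 1 := by
    have h1 : (b - a : ℕ) + (c - b : ℕ) ≤ 2^(m+1) - 1 := by omega
    have h2 : (((b - a : ℕ) + (c - b : ℕ) : ℕ) : ℝ) ≤ ((2^(m+1) - 1 : ℕ) : ℝ) := by exact_mod_cast h1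
    have h3 : ((2^(m+1) - 1 : ℕ) : ℝ) = (2:ℝ)^(m+1) - 1 := by
      push_cast [Nat.cast_sub (Nat.one_le_two_pow)]
      ring
    push_cast at h2
    linarith
  have hAlb : η ≤ Aν := by
    rw [hAdef]; exact le_mul_of_one_le_left hηpos.le hba1
  have hAub : Aν ≤ π - η := by
    rw [hAdef]
    have := mul_le_mul_of_nonneg_right hbaub hηpos.le
    linarith [hqη]
  have hBlb : η ≤ Bν := by
    rw [hBdef]; exact le_mul_of_one_le_left hηpos.le hcb1
  have hABub : Aν + Bν ≤ π - η := by
    have hAB : Aν + Bν = (((b - a : ℕ) : ℝ) + ((c - b : ℕ) : ℝ)) * η := by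
      rw [hAdef, hBdef]; ring
    rw [hAB]
    have := mul_le_mul_of_nonneg_right hsumub hηpos.le
    linarith [hqη]
  have hABlb : η ≤ Aν + Bν := by
    linarith [hAlb, hBlb, hηpos]
  have hBub : Bν ≤ π - η := by
    linarith [hABub, hAlb, hηpos]
  have hsA : s ≤ Real.sin Aν := sin_lb hηpos hη2.le hAlb hAub
  have hsB : s ≤ Real.sin Bν := sin_lb hηpos hη2.le hBlb hBub
  have hsAB : s ≤ Real.sin (Aν + Bν) := sin_lb hηpos hη2.le hABlb hABub
  have p1 : 0 < Real.sin Aν := lt_of_lt_of_le hs hsA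
  have p2 : 0 < Real.sin Bν := lt_of_lt_of_le hs hsB
  have hDlb : 4 * s^3 ≤ D := by
    rw [hDtrig]
    have h12 : s * s ≤ Real.sin Aν * Real.sin Bν :=
      mul_le_mul hsA hsB hs.le p1.le
    have h123 : (s * s) * s ≤ (Real.sin Aν * Real.sin Bν) * Real.sin (Aν + Bν) :=
      mul_le_mul h12 hsAB hs.le (mul_nonneg p1.le p2.le)
    calc 4 * s^3 = 4 * ((s * s) * s) := by ring
      _ ≤ 4 * ((Real.sin Aν * Real.sin Bν) * Real.sin (Aν + Bν)) := by linarith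
      _ = 4 * Real.sin Aν * Real.sin Bν * Real.sin (Aν + Bν) := by ring
  have habsD : D ≤ |D| := le_abs_self D
  have hscube : 0 < s^3 := by positivity
  linarith [hDlb, hDb, habsD, hscube]


/-- a region pattern `p` "serves" edge `k` -/
noncomputable def Serves (v : Fin w → ℝ) (c : ℝ) (m d : ℕ)
    (p : Fin d → Fin w → Bool) (k : ℕ) : Prop :=
  ¬(nuq A1 A v (extq p) (d-1) 0 = 0 ∧ nuq A1 A v (extq p) (d-1) 1 = 0) ∧
  |nuq A1 A v (extq p) (d-1) 0 * (Real.cos (π / (2:ℝ)^(m+1)) * polyNormal m k 0)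
    + nuq A1 A v (extq p) (d-1) 1 * (Real.cos (π / (2:ℝ)^(m+1)) * polyNormal m k 1)
    + tauq b1 A b v c (extq p) (d-1)|
    ≤ (|nuq A1 A v (extq p) (d-1) 0| + |nuq A1 A v (extq p) (d-1) 1|)
      * (Real.cos (π / (2:ℝ)^(m+1)) * (Real.sin (π / (2:ℝ)^(m+1)))^3 / 8)

set_option maxHeartbeats 1000000 in
lemma serve_exists (m d : ℕ) (hm : 1 ≤ m) (hd : 1 ≤ d)
    (v : Fin w → ℝ) (c : ℝ) (F : (Fin 2 → ℝ) → ℝ)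
    (hFeq : ∀ x, F x = (∑ j, v j * mlpHidden A1 b1 A b (d - 1) x j) + c)
    (hcls : CorrectlyClassifies m F)
    (k : ℕ) (hk : k < 2^(m+1)) :
    ∃ p : Fin d → Fin w → Bool, p ∈ Set.range (patFin A1 b1 A b d)
      ∧ Serves A1 b1 A b v c m d p k := by
  classical
  set η : ℝ := π / (2:ℝ)^(m+1) with hηdef
  have h2powpos : (0:ℝ) < (2:ℝ)^(m+1) := by positivity
  have h2pow : (4:ℝ) ≤ (2:ℝ)^(m+1) := by
    calc (4:ℝ) = (2:ℝ)^2 := by norm_num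
    _ ≤ (2:ℝ)^(m+1) := by
        apply pow_le_pow_right₀ (by norm_num)
        omega
  have hηpos : 0 < η := div_pos pi_pos h2powpos
  have hη4 : η ≤ π/4 := by
    rw [hηdef, div_le_div_iff₀ h2powpos (by norm_num)]
    have := mul_le_mul_of_nonneg_left h2pow pi_pos.le
    linarith
  have hη2 : η < π/2 := by linarith [pi_pos]
  set s : ℝ := Real.sin η with hsdef
  set r : ℝ := Real.cos η with hrdef
  have hs : 0 < s := Real.sin_pos_of_pos_of_lt_pi hηpos (by linarith [pi_pos])
  have hs1 : s ≤ 1 := Real.sin_le_one η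
  have hr : 0 < r := Real.cos_pos_of_mem_Ioo ⟨by linarith [pi_pos], hη2⟩
  set δ : ℝ := r * s^3 / 8 with hδdef
  have hδpos : 0 < δ := by positivity
  have hs3 : s^3 ≤ 1 := pow_le_one₀ hs.le hs1
  have hδr : δ < r := by
    rw [hδdef]
    nlinarith [hr, hs3, mul_le_of_le_one_right hr.le hs3]
  set nk : Fin 2 → ℝ := polyNormal m k with hnkdef
  have hnk0 : nk 0 = Real.cos (π / 2 + (2 * (k : ℝ) + 1) * π / (2 : ℝ) ^ (m + 1)) := rfl
  have hnk1 : nk 1 = Real.sin (π / 2 + (2 * (k : ℝ) + 1) * π / (2 : ℝ) ^ (m + 1)) := rfl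
  have hnorm : nk 0 ^ 2 + nk 1 ^ 2 = 1 := by
    rw [hnk0, hnk1]; exact Real.cos_sq_add_sin_sq _
  have habs0 : |nk 0| ≤ 1 := by rw [hnk0]; exact Real.abs_cos_le_one _
  have habs1 : |nk 1| ≤ 1 := by rw [hnk1]; exact Real.abs_sin_le_one _
  -- the probe segment
  set q : ℝ → (Fin 2 → ℝ) := fun t => fun i => (r + (2*t - 1)*δ) * nk i with hqdef
  have hqcont : Continuous q := by
    apply continuous_pi
    intro i
    exact (continuous_const.add ((continuous_const.mul continuous_id').sub
      continuous_const |>.mul continuous_const)).mul continuous_const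
  -- q 0 in interior
  have hq0 : ∀ i, q 0 i = (r - δ) * nk i := by
    intro i; show (r + (2*0 - 1)*δ) * nk i = _; ring
  have hq1 : ∀ i, q 1 i = (r + δ) * nk i := by
    intro i; show (r + (2*1 - 1)*δ) * nk i = _; ring
  have hq0int : q 0 ∈ interior (P m) := by
    set U : Set (Fin 2 → ℝ) :=
      {x | ∀ k' < 2^(m+1), x 0 * polyNormal m k' 0 + x 1 * polyNormal m k' 1 < r} with hU
    have hUopen : IsOpen U := by
      have : U = ⋂ k' ∈ Finset.range (2^(m+1)),
          {x : Fin 2 → ℝ | x 0 * polyNormal m k' 0 + x 1 * polyNormal m k' 1 < r} := by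
        ext x
        simp only [hU, Set.mem_setOf_eq, Set.mem_iInter, Finset.mem_range]
      rw [this]
      apply isOpen_biInter_finset
      intro k' _
      exact isOpen_lt (((continuous_apply 0).mul continuous_const).add
        ((continuous_apply 1).mul continuous_const)) continuous_const
    have hUP : U ⊆ P m := by
      intro x hx k' hk'
      exact (hx k' hk').le
    have hq0U : q 0 ∈ U := by
      intro k' _
      have hip : polyNormal m k 0 * polyNormal m k' 0 + polyNormal m k 1 * polyNormal m k' 1 ≤ 1 := by
        show Real.cos _ * Real.cos _ + Real.sin _ * Real.sin _ ≤ 1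
        rw [← Real.cos_sub]
        exact Real.cos_le_one _
      have he : q 0 0 * polyNormal m k' 0 + q 0 1 * polyNormal m k' 1
          = (r - δ) * (polyNormal m k 0 * polyNormal m k' 0 + polyNormal m k 1 * polyNormal m k' 1) := by
        rw [hq0 0, hq0 1]; show (r - δ) * nk 0 * _ + (r - δ) * nk 1 * _ = _; rw [hnkdef]; ring
      rw [he]
      calc (r - δ) * (polyNormal m k 0 * polyNormal m k' 0 + polyNormal m k 1 * polyNormal m k' 1)
          ≤ (r - δ) * 1 := by
            apply mul_le_mul_of_nonneg_left hip (by linarith)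
        _ < r := by linarith
    exact interior_maximal hUP hUopen hq0U
  have hq1out : q 1 ∉ P m := by
    intro hmem
    have := hmem k hk
    have he : q 1 0 * polyNormal m k 0 + q 1 1 * polyNormal m k 1
        = (r + δ) * (nk 0 ^2 + nk 1 ^2) := by
      rw [hq1 0, hq1 1]
      show (r + δ) * nk 0 * nk 0 + (r + δ) * nk 1 * nk 1 = _
      ring
    rw [he, hnorm, mul_one] at this
    show False
    have : r + δ ≤ r := this
    linarith
  have hFcont := continuous_F A1 b1 A b v c d F hFeq
  have hFq0 : 0 < F (q 0) := hcls.1 _ hq0int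
  set Z : Set ℝ := {t | t ∈ Set.Icc (0:ℝ) 1 ∧ F (q t) ≤ 0} with hZ
  have hZclosed : IsClosed Z := by
    have : Z = Set.Icc (0:ℝ) 1 ∩ (fun t => F (q t)) ⁻¹' (Set.Iic 0) := rfl
    rw [this]
    exact isClosed_Icc.inter (IsClosed.preimage (hFcont.comp hqcont) isClosed_Iic)
  have h1Z : (1:ℝ) ∈ Z := ⟨⟨zero_le_one, le_refl 1⟩, hcls.2 _ hq1out⟩
  have hbdd : BddBelow Z := ⟨0, fun t ht => ht.1.1⟩
  set T : ℝ := sInf Z with hT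
  have hTZ : T ∈ Z := hZclosed.csInf_mem ⟨1, h1Z⟩ hbdd
  have hFT : F (q T) ≤ 0 := hTZ.2
  have hT01 : T ∈ Set.Icc (0:ℝ) 1 := hTZ.1
  have hT0 : 0 < T := by
    rcases eq_or_lt_of_le hT01.1 with h | h
    · exfalso; rw [← h] at hFT; linarith
    · exact h
  set tseq : ℕ → ℝ := fun n => T - T / (n+2) with htseq
  have htlt : ∀ n, tseq n < T := by
    intro n
    have : 0 < T / ((n:ℝ)+2) := div_pos hT0 (by positivity)
    show T - T / ((n:ℝ)+2) < T
    linarith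
  have htnn : ∀ n, 0 ≤ tseq n := by
    intro n
    have hn2 : (1:ℝ) ≤ (n:ℝ)+2 := by
      have : (0:ℝ) ≤ (n:ℝ) := Nat.cast_nonneg n
      linarith
    have : T / ((n:ℝ)+2) ≤ T := div_le_self hT0.le hn2
    show 0 ≤ T - T / ((n:ℝ)+2)
    linarith
  have htIcc : ∀ n, tseq n ∈ Set.Icc (0:ℝ) 1 := fun n =>
    ⟨htnn n, le_trans (htlt n).le hT01.2⟩
  have hFpos : ∀ n, 0 < F (q (tseq n)) := by
    intro n
    have hnot : tseq n ∉ Z := notMem_of_lt_csInf (htlt n) hbdd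
    by_contra h
    exact hnot ⟨htIcc n, by linarith⟩
  set g : ℕ → (Fin d → Fin w → Bool) := fun n => patFin A1 b1 A b d (q (tseq n)) with hg
  obtain ⟨p, hpinf⟩ := Finite.exists_infinite_fiber g
  have hfibinf : {n | g n = p}.Infinite := by
    rw [← Set.infinite_coe_iff]
    exact hpinf
  obtain ⟨n₀, hn₀⟩ := hfibinf.nonempty
  have hprange : p ∈ Set.range (patFin A1 b1 A b d) := ⟨q (tseq n₀), hn₀⟩
  set ν : Fin 2 → ℝ := nuq A1 A v (extq p) (d-1) with hν
  set τν : ℝ := tauq b1 A b v c (extq p) (d-1) with hτ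
  set gfun : (Fin 2 → ℝ) → ℝ := fun x => ν 0 * x 0 + ν 1 * x 1 + τν with hgfun
  set region : Set (Fin 2 → ℝ) := {x | patFin A1 b1 A b d x = p} with hregion
  have hEqOn : Set.EqOn F gfun region := by
    intro x hx
    have hx' : ∀ k' < d, ∀ j, patB A1 b1 A b x k' j = extq p k' j :=
      (patFin_eq_iff A1 b1 A b d x p).mp hx
    exact F_eq_on_region A1 b1 A b v c d hd F hFeq (extq p) x hx'
  have hgcont : Continuous gfun := by
    apply Continuous.add
    apply Continuous.add
    · exact continuous_const.mul (continuous_apply 0)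
    · exact continuous_const.mul (continuous_apply 1)
    · exact continuous_const
  have hEqClos : Set.EqOn F gfun (closure region) := hEqOn.closure hFcont hgcont
  -- q T is in the closure of the region
  have htseqT : Filter.Tendsto tseq Filter.atTop (nhds T) := by
    have h1 : Filter.Tendsto (fun n : ℕ => T / ((n:ℝ)+2)) Filter.atTop (nhds 0) := by
      have h2 : Filter.Tendsto (fun n : ℕ => ((n:ℝ)+2)) Filter.atTop Filter.atTop := by
        apply Filter.tendsto_atTop_add_const_right
        exact tendsto_natCast_atTop_atTop
      simpa using Filter.Tendsto.div_atTop (tendsto_const_nhds (x := T)) h2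
    have := Filter.Tendsto.const_sub T h1
    simpa using this
  have hqtend : Filter.Tendsto (fun n => q (tseq n)) Filter.atTop (nhds (q T)) :=
    (hqcont.tendsto T).comp htseqT
  have hfreq : ∃ᶠ n in Filter.atTop, q (tseq n) ∈ region := by
    rw [Filter.frequently_atTop]
    intro a
    obtain ⟨b', hb'mem, hb'gt⟩ := hfibinf.exists_gt a
    exact ⟨b', hb'gt.le, hb'mem⟩
  have hclos : q T ∈ closure region := mem_closure_of_frequently_of_tendsto hfreq hqtend
  have hgT : gfun (q T) ≤ 0 := by
    rw [← hEqClos hclos]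
    exact hFT
  have hs0mem : q (tseq n₀) ∈ region := hn₀
  have hgs : 0 < gfun (q (tseq n₀)) := by
    rw [← hEqOn hs0mem]
    exact hFpos n₀
  -- nondegeneracy
  have hνne : ¬(ν 0 = 0 ∧ ν 1 = 0) := by
    rintro ⟨h0, h1⟩
    rw [hgfun] at hgs hgT
    simp only [h0, h1, zero_mul, zero_add] at hgs hgT
    linarith
  -- distance estimates
  have hqd : ∀ t ∈ Set.Icc (0:ℝ) 1, ∀ i, |r * nk i - q t i| ≤ δ := by
    intro t ht i
    have he : r * nk i - q t i = -((2*t-1) * δ * nk i) := by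
      show r * nk i - (r + (2*t - 1)*δ) * nk i = _
      ring
    rw [he, abs_neg, abs_mul, abs_mul]
    have h2t : |2*t - 1| ≤ 1 := by
      rw [abs_le]
      constructor <;> [linarith [ht.1]; linarith [ht.2]]
    have hnki : |nk i| ≤ 1 := by
      fin_cases i
      · exact habs0
      · exact habs1
    calc |2*t-1| * |δ| * |nk i| ≤ 1 * |δ| * 1 := by
          apply mul_le_mul (mul_le_mul h2t (le_refl _) (abs_nonneg _) zero_le_one) hnki
            (abs_nonneg _) (by positivity)
      _ = δ := by rw [abs_of_pos hδpos]; ring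
    -- done
  set V : ℝ := ν 0 * (r * nk 0) + ν 1 * (r * nk 1) + τν with hV
  have hVd : ∀ t ∈ Set.Icc (0:ℝ) 1, |V - gfun (q t)| ≤ (|ν 0| + |ν 1|) * δ := by
    intro t ht
    have he : V - gfun (q t) = ν 0 * (r * nk 0 - q t 0) + ν 1 * (r * nk 1 - q t 1) := by
      rw [hV, hgfun]; ring
    rw [he]
    calc |ν 0 * (r * nk 0 - q t 0) + ν 1 * (r * nk 1 - q t 1)|
        ≤ |ν 0 * (r * nk 0 - q t 0)| + |ν 1 * (r * nk 1 - q t 1)| := abs_add_le _ _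
      _ = |ν 0| * |r * nk 0 - q t 0| + |ν 1| * |r * nk 1 - q t 1| := by rw [abs_mul, abs_mul]
      _ ≤ |ν 0| * δ + |ν 1| * δ := by
          apply add_le_add
          · exact mul_le_mul_of_nonneg_left (hqd t ht 0) (abs_nonneg _)
          · exact mul_le_mul_of_nonneg_left (hqd t ht 1) (abs_nonneg _)
      _ = (|ν 0| + |ν 1|) * δ := by ring
  have hVub : V ≤ (|ν 0| + |ν 1|) * δ := by
    have h := hVd T hT01
    have := abs_le.mp h
    linarith [hgT, this.1, this.2]
  have hVlb : -((|ν 0| + |ν 1|) * δ) ≤ V := by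
    have h := hVd (tseq n₀) (htIcc n₀)
    have := abs_le.mp h
    linarith [hgs, this.1, this.2]
  refine ⟨p, hprange, hνne, ?_⟩
  show |ν 0 * (r * nk 0) + ν 1 * (r * nk 1) + τν| ≤ (|ν 0| + |ν 1|) * δ
  rw [← hV]
  exact abs_le.mpr ⟨hVlb, hVub⟩


lemma sort3 {a b c : ℕ} (hab : a ≠ b) (hac : a ≠ c) (hbc : b ≠ c) :
    ∃ x y z : ℕ, x < y ∧ y < z ∧
      ∀ Q : ℕ → Prop, Q a → Q b → Q c → (Q x ∧ Q y ∧ Q z) := by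
  rcases lt_trichotomy a b with h1 | h1 | h1
  · rcases lt_trichotomy b c with h2 | h2 | h2
    · exact ⟨a, b, c, h1, h2, fun Q qa qb qc => ⟨qa, qb, qc⟩⟩
    · exact absurd h2 hbc
    · rcases lt_trichotomy a c with h3 | h3 | h3
      · exact ⟨a, c, b, h3, h2, fun Q qa qb qc => ⟨qa, qc, qb⟩⟩
      · exact absurd h3 hac
      · exact ⟨c, a, b, h3, h1, fun Q qa qb qc => ⟨qc, qa, qb⟩⟩
  · exact absurd h1 hab
  · rcases lt_trichotomy a c with h2 | h2 | h2
    · exact ⟨b, a, c, h1, h2, fun Q qa qb qc => ⟨qb, qa, qc⟩⟩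
    · exact absurd h2 hac
    · rcases lt_trichotomy b c with h3 | h3 | h3
      · exact ⟨b, c, a, h3, h2, fun Q qa qb qc => ⟨qb, qc, qa⟩⟩
      · exact absurd h3 hbc
      · exact ⟨c, b, a, h3, h1, fun Q qa qb qc => ⟨qc, qb, qa⟩⟩

lemma main (m d : ℕ) (hm : 1 ≤ m) (hd : 1 ≤ d) (hw : 2 ≤ w)
    (v : Fin w → ℝ) (c : ℝ) (F : (Fin 2 → ℝ) → ℝ)
    (hFeq : ∀ x, F x = (∑ j, v j * mlpHidden A1 b1 A b (d - 1) x j) + c)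
    (hcls : CorrectlyClassifies m F) :
    2^m ≤ w^(2*d) := by
  classical
  have hchoice : ∀ k : ℕ, ∃ p : Fin d → Fin w → Bool,
      k < 2^(m+1) → (p ∈ Set.range (patFin A1 b1 A b d) ∧ Serves A1 b1 A b v c m d p k) := by
    intro k
    by_cases hk : k < 2^(m+1)
    · obtain ⟨p, h1, h2⟩ := serve_exists A1 b1 A b m d hm hd v c F hFeq hcls k hk
      exact ⟨p, fun _ => ⟨h1, h2⟩⟩
    · exact ⟨fun _ _ => false, fun h => absurd h hk⟩
  choose Pk hPk using hchoice
  set sfin : Finset ℕ := Finset.range (2^(m+1)) with hsfin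
  have hfib : ∀ pp ∈ sfin.image Pk, (sfin.filter (fun k => Pk k = pp)).card ≤ 2 := by
    intro pp _
    by_contra hgt
    push_neg at hgt
    have h3 : 3 ≤ (sfin.filter (fun k => Pk k = pp)).card := hgt
    obtain ⟨t, hts, htc⟩ := Finset.exists_subset_card_eq h3
    obtain ⟨x, y, z, hxy, hxz, hyz, hteq⟩ := Finset.card_eq_three.mp htc
    have hmem : ∀ u ∈ t, u < 2^(m+1) ∧ Serves A1 b1 A b v c m d pp u := by
      intro u hu
      have h := hts hu
      rw [Finset.mem_filter] at h
      obtain ⟨hu1, hu2⟩ := h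
      rw [hsfin, Finset.mem_range] at hu1
      have h2 := hPk u hu1
      rw [hu2] at h2
      exact ⟨hu1, h2.2⟩
    have hx := hmem x (by rw [hteq]; simp)
    have hy := hmem y (by rw [hteq]; simp)
    have hz := hmem z (by rw [hteq]; simp)
    obtain ⟨x', y', z', h1, h2, hQ⟩ := sort3 hxy hxz hyz
    obtain ⟨⟨_, hxs⟩, ⟨_, hys⟩, ⟨hzb, hzs⟩⟩ :=
      hQ (fun u => u < 2^(m+1) ∧ Serves A1 b1 A b v c m d pp u) hx hy hz
    exact no_three_near m hm x' y' z' h1 h2 hzb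
      (nuq A1 A v (extq pp) (d-1) 0) (nuq A1 A v (extq pp) (d-1) 1)
      (tauq b1 A b v c (extq pp) (d-1)) hxs.1 hxs.2 hys.2 hzs.2
  have hcard := Finset.card_le_mul_card_image sfin 2 hfib
  have himg : sfin.image Pk ⊆ (Set.toFinite (Set.range (patFin A1 b1 A b d))).toFinset := by
    intro pp hpp
    rw [Finset.mem_image] at hpp
    obtain ⟨k, hk, rfl⟩ := hpp
    rw [Set.Finite.mem_toFinset]
    exact (hPk k (by rw [hsfin, Finset.mem_range] at hk; exact hk)).1
  have himgcard : (sfin.image Pk).card ≤ (Set.range (patFin A1 b1 A b d)).ncard := by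
    have h := Finset.card_le_card himg
    rwa [← Set.ncard_eq_toFinset_card _ _] at h
  have hrange := range_patFin_card A1 b1 A b hw d
  have hscard : sfin.card = 2^(m+1) := Finset.card_range _
  have hpow : (w*w)^d = w^(2*d) := by
    rw [show w*w = w^2 by ring, ← pow_mul]
  have h2m : 2^(m+1) = 2 * 2^m := by rw [pow_succ]; ring
  omega


end WDT

/-- If a ReLU MLP of depth `d ≥ 1` and width `w ≥ 2` correctly classifies `f_m`,
then `w^(2d) ≥ 2^m`. -/
theorem width_depth_tradeoff (m d w : ℕ) (hm : 1 ≤ m) (hd : 1 ≤ d) (hw : 2 ≤ w)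
    (F : (Fin 2 → ℝ) → ℝ) (hF : IsReluMLP d w F) (hcls : CorrectlyClassifies m F) :
    2 ^ m ≤ w ^ (2 * d) := by
  obtain ⟨A1, b1, A, b, v, c, hFeq⟩ := hF
  exact WDT.main A1 b1 A b m d hm hd hw v c F hFeq hcls
end

section
/- Let w ≥ 1, A ∈ ℝ^(w×2), b ∈ ℝ^w, and let σ denote the componentwise ReLU. Then there exist at most 1 + w(w+1)/2 convex sets whose union is ℝ² such that the map x ↦ σ(Ax + b) agrees with an affine map ℝ² → ℝ^w on each of them. -/
open Real

open scoped Classical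

section Arrangement

variable {E : Type*} [AddCommGroup E] [Module ℝ E]

/-- "Open" cell of a sign vector: strict positive where `s i = true`, nonpositive else. -/
def cellO {k : ℕ} (f : Fin k → E →ᵃ[ℝ] ℝ) (s : Fin k → Bool) : Set E :=
  {x | ∀ i, if s i then 0 < f i x else f i x ≤ 0}

lemma convex_cellO {k : ℕ} (f : Fin k → E →ᵃ[ℝ] ℝ) (s : Fin k → Bool) :
    Convex ℝ (cellO f s) := by
  intro x hx y hy a b ha hb hab
  intro i
  have hx' := hx i
  have hy' := hy i
  have hxy : a • x + b • y = AffineMap.lineMap x y b := by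
    rw [AffineMap.lineMap_apply]
    have ha1 : a = 1 - b := by linarith
    subst ha1
    simp only [vsub_eq_sub, vadd_eq_add, smul_sub, sub_smul, one_smul]
    abel
  have key : f i (a • x + b • y) = b * (f i y - f i x) + f i x := by
    rw [hxy, AffineMap.apply_lineMap, AffineMap.lineMap_apply]
    simp [smul_eq_mul]
  cases hsi : s i with
  | true =>
    simp only [hsi, if_true] at hx' hy' ⊢
    rw [key]
    rcases eq_or_lt_of_le hb with hb0 | hb0
    · rw [← hb0]; simpa using hx'
    · nlinarith [mul_pos hb0 hy', mul_nonneg ha hx'.le]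
  | false =>
    simp [hsi] at hx' hy' ⊢
    rw [key]
    nlinarith [mul_nonneg ha (neg_nonneg.2 hx'), mul_nonneg hb (neg_nonneg.2 hy')]

/-- Realizable sign vectors. -/
noncomputable def sgns {k : ℕ} (f : Fin k → E →ᵃ[ℝ] ℝ) : Finset (Fin k → Bool) :=
  Finset.univ.filter (fun s => (cellO f s).Nonempty)

lemma mem_sgns {k : ℕ} {f : Fin k → E →ᵃ[ℝ] ℝ} {s : Fin k → Bool} :
    s ∈ sgns f ↔ (cellO f s).Nonempty := by simp [sgns]

/-- Doubly-extendable sign vectors. -/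
noncomputable def doubles {k : ℕ} (f : Fin (k + 1) → E →ᵃ[ℝ] ℝ) : Finset (Fin k → Bool) :=
  (sgns (fun i => f i.castSucc)).filter
    (fun t => Fin.snoc t true ∈ sgns f ∧ Fin.snoc t false ∈ sgns f)

lemma init_mem_sgns {k : ℕ} {f : Fin (k + 1) → E →ᵃ[ℝ] ℝ} {s : Fin (k+1) → Bool}
    (hs : s ∈ sgns f) : Fin.init s ∈ sgns (fun i => f i.castSucc) := by
  rw [mem_sgns] at hs ⊢
  obtain ⟨x, hx⟩ := hs
  exact ⟨x, fun i => hx i.castSucc⟩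

lemma card_sgns_le_step {k : ℕ} (f : Fin (k + 1) → E →ᵃ[ℝ] ℝ) :
    (sgns f).card ≤ (sgns (fun i => f i.castSucc)).card + (doubles f).card := by
  classical
  set S := sgns (fun i => f i.castSucc) with hS
  have hmap : ∀ s ∈ sgns f, Fin.init s ∈ S := fun s hs => init_mem_sgns hs
  rw [Finset.card_eq_sum_card_fiberwise hmap]
  have h1 : ∀ t ∈ S, ((sgns f).filter (fun s => Fin.init s = t)).card ≤
      (if t ∈ doubles f then 1 else 0) + 1 := by
    intro t htS
    have hsub : ((sgns f).filter (fun s => Fin.init s = t)) ⊆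
        {Fin.snoc t true, Fin.snoc t false} := by
      intro s hs
      rw [Finset.mem_filter] at hs
      have h2 : s = Fin.snoc t (s (Fin.last k)) := by
        rw [← hs.2, Fin.snoc_init_self]
      cases hb : s (Fin.last k)
      · rw [h2, hb]; simp
      · rw [h2, hb]; simp
    by_cases hd : t ∈ doubles f
    · simp only [hd, if_true]
      calc ((sgns f).filter (fun s => Fin.init s = t)).card
          ≤ ({Fin.snoc t true, Fin.snoc t false} : Finset (Fin (k+1) → Bool)).card :=
            Finset.card_le_card hsub
        _ ≤ 2 := Finset.card_insert_le _ _ |>.trans (by simp)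
    · simp only [hd, if_false]
      rw [Finset.card_le_one]
      intro s hs s' hs'
      rw [Finset.mem_filter] at hs hs'
      have h2 : s = Fin.snoc t (s (Fin.last k)) := by rw [← hs.2, Fin.snoc_init_self]
      have h2' : s' = Fin.snoc t (s' (Fin.last k)) := by rw [← hs'.2, Fin.snoc_init_self]
      by_cases hbb : s (Fin.last k) = s' (Fin.last k)
      · rw [h2, h2', hbb]
      · exfalso
        apply hd
        rw [doubles, Finset.mem_filter]
        refine ⟨htS, ?_, ?_⟩
        · cases hb : s (Fin.last k)
          · cases hb' : s' (Fin.last k)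
            · exact absurd (hb.trans hb'.symm) hbb
            · rw [← hb', ← h2']; exact hs'.1
          · rw [← hb, ← h2]; exact hs.1
        · cases hb : s (Fin.last k)
          · rw [← hb, ← h2]; exact hs.1
          · cases hb' : s' (Fin.last k)
            · rw [← hb', ← h2']; exact hs'.1
            · exact absurd (hb.trans hb'.symm) hbb
  calc ∑ t ∈ S, ((sgns f).filter (fun s => Fin.init s = t)).card
      ≤ ∑ t ∈ S, ((if t ∈ doubles f then 1 else 0) + 1) := Finset.sum_le_sum h1
    _ = (∑ t ∈ S, if t ∈ doubles f then 1 else 0) + S.card := by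
        rw [Finset.sum_add_distrib, Finset.sum_const, smul_eq_mul, mul_one]
    _ = (doubles f).card + S.card := by
        rw [Finset.sum_ite_mem]
        congr 1
        rw [Finset.sum_const, smul_eq_mul, mul_one]
        congr 1
        rw [Finset.inter_eq_right]
        exact Finset.filter_subset _ _
    _ = S.card + (doubles f).card := by ring

/-- From a double, produce a point on the last hyperplane inside the cell. -/
lemma doubles_exists_zero {k : ℕ} (f : Fin (k + 1) → E →ᵃ[ℝ] ℝ) {t : Fin k → Bool}
    (ht : t ∈ doubles f) :
    ∃ z, z ∈ cellO (fun i => f i.castSucc) t ∧ f (Fin.last k) z = 0 := by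
  rw [doubles, Finset.mem_filter] at ht
  obtain ⟨htS, htT, htF⟩ := ht
  rw [mem_sgns] at htT htF
  obtain ⟨x, hx⟩ := htT
  obtain ⟨y, hy⟩ := htF
  have hxlast : 0 < f (Fin.last k) x := by
    have := hx (Fin.last k); rwa [Fin.snoc_last, if_pos rfl] at this
  have hylast : f (Fin.last k) y ≤ 0 := by
    have := hy (Fin.last k); rw [Fin.snoc_last] at this; simpa using this
  have hxcell : x ∈ cellO (fun i => f i.castSucc) t := by
    intro i
    have := hx i.castSucc
    rwa [Fin.snoc_castSucc] at this
  have hycell : y ∈ cellO (fun i => f i.castSucc) t := by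
    intro i
    have := hy i.castSucc
    rwa [Fin.snoc_castSucc] at this
  have hdenom : 0 < f (Fin.last k) x - f (Fin.last k) y := by linarith
  set θ : ℝ := f (Fin.last k) x / (f (Fin.last k) x - f (Fin.last k) y) with hθ
  have hθ0 : 0 ≤ θ := div_nonneg hxlast.le hdenom.le
  have hθ1 : θ ≤ 1 := by
    rw [hθ, div_le_one hdenom]; linarith
  refine ⟨AffineMap.lineMap x y θ, ?_, ?_⟩
  · have hseg : segment ℝ x y ⊆ cellO (fun i => f i.castSucc) t :=
      (convex_cellO _ _).segment_subset hxcell hycell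
    apply hseg
    rw [segment_eq_image_lineMap]
    exact ⟨θ, ⟨hθ0, hθ1⟩, rfl⟩
  · rw [AffineMap.apply_lineMap, AffineMap.lineMap_apply]
    show θ • (f (Fin.last k) y - f (Fin.last k) x) + f (Fin.last k) x = 0
    rw [smul_eq_mul, hθ]
    field_simp
    ring

lemma doubles_pos {k : ℕ} (f : Fin (k + 1) → E →ᵃ[ℝ] ℝ) {t : Fin k → Bool}
    (ht : t ∈ doubles f) : ∃ x, 0 < f (Fin.last k) x := by
  rw [doubles, Finset.mem_filter] at ht
  obtain ⟨x, hx⟩ := mem_sgns.mp ht.2.1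
  refine ⟨x, ?_⟩
  have := hx (Fin.last k)
  rwa [Fin.snoc_last, if_pos rfl] at this

/-- Determination: the sign vector of a double is determined by any zero point in its cell. -/
lemma doubles_sign_eq {k : ℕ} {f : Fin (k + 1) → E →ᵃ[ℝ] ℝ} {t : Fin k → Bool} {z : E}
    (hz : z ∈ cellO (fun i => f i.castSucc) t) (i : Fin k) :
    t i = decide (0 < f i.castSucc z) := by
  have := hz i
  cases ht : t i
  · simp only [ht] at this
    simp at this
    simp [not_lt.mpr this]
  · simp only [ht] at this
    simp at this
    simp [this]

/-- 1-D: at most one double. -/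
lemma card_doubles_le_one {k : ℕ} (g : Fin (k + 1) → ℝ →ᵃ[ℝ] ℝ) :
    (doubles g).card ≤ 1 := by
  rw [Finset.card_le_one]
  intro t ht t' ht'
  obtain ⟨z, hz, hz0⟩ := doubles_exists_zero g ht
  obtain ⟨z', hz', hz0'⟩ := doubles_exists_zero g ht'
  obtain ⟨x, hxpos⟩ := doubles_pos g ht
  have hzz : z = z' := by
    by_contra hne
    have h1 : (g (Fin.last k)).linear (z - z') = 0 := by
      have := (g (Fin.last k)).linearMap_vsub z z'
      simp only [vsub_eq_sub] at this
      rw [this, hz0, hz0', sub_zero]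
    have h2 : (z - z') * (g (Fin.last k)).linear 1 = 0 := by
      rw [← smul_eq_mul, ← map_smul, smul_eq_mul, mul_one, h1]
    have h3 : (g (Fin.last k)).linear 1 = 0 := by
      rcases mul_eq_zero.mp h2 with h | h
      · exact absurd (sub_eq_zero.mp h) hne
      · exact h
    have h4 : g (Fin.last k) x - g (Fin.last k) z = 0 := by
      have hv := (g (Fin.last k)).linearMap_vsub x z
      simp only [vsub_eq_sub] at hv
      have hx4 : (g (Fin.last k)).linear (x - z) = (x - z) * (g (Fin.last k)).linear 1 := by
        rw [← smul_eq_mul, ← map_smul, smul_eq_mul, mul_one]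
      rw [← hv, hx4, h3, mul_zero]
    rw [hz0] at h4
    linarith
  funext i
  rw [doubles_sign_eq hz i, doubles_sign_eq hz' i, hzz]

/-- 1-D arrangement bound. -/
lemma card_sgns_line : ∀ (k : ℕ) (g : Fin k → ℝ →ᵃ[ℝ] ℝ), (sgns g).card ≤ k + 1
  | 0, g => by
    calc (sgns g).card ≤ Fintype.card (Fin 0 → Bool) := Finset.card_le_univ _
      _ = 1 := by simp
  | (k+1), g => by
    calc (sgns g).card ≤ (sgns (fun i => g i.castSucc)).card + (doubles g).card :=
        card_sgns_le_step g
      _ ≤ (k + 1) + 1 := add_le_add (card_sgns_line k _) (card_doubles_le_one g)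

/-- In the plane, at most `k+1` doubles, by restricting to the last line. -/
lemma card_doubles_le_plane {k : ℕ} (f : Fin (k + 1) → (Fin 2 → ℝ) →ᵃ[ℝ] ℝ) :
    (doubles f).card ≤ k + 1 := by
  rcases (doubles f).eq_empty_or_nonempty with h | ⟨t0, ht0⟩
  · rw [h]; simp
  obtain ⟨p, _, hp0⟩ := doubles_exists_zero f ht0
  obtain ⟨x, hxpos⟩ := doubles_pos f ht0
  set l := (f (Fin.last k)).linear with hl
  set a := l ((Pi.single 0 1 : Fin 2 → ℝ)) with ha
  set b := l ((Pi.single 1 1 : Fin 2 → ℝ)) with hb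
  have hrepr : ∀ u : Fin 2 → ℝ, l u = u 0 * a + u 1 * b := by
    intro u
    have hu : u = u 0 • (Pi.single 0 1 : Fin 2 → ℝ) + u 1 • (Pi.single 1 1 : Fin 2 → ℝ) := by
      funext j; fin_cases j <;> simp
    rw [show l u = l (u 0 • (Pi.single 0 1 : Fin 2 → ℝ) + u 1 • (Pi.single 1 1 : Fin 2 → ℝ)) by rw [← hu]]
    rw [map_add, map_smul, map_smul, smul_eq_mul, smul_eq_mul]
  have hlxp : l (x - p) = f (Fin.last k) x := by
    have hv := (f (Fin.last k)).linearMap_vsub x p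
    simp only [vsub_eq_sub] at hv
    rw [← hl] at hv
    rw [hv, hp0, sub_zero]
  have hne : ¬(a = 0 ∧ b = 0) := by
    rintro ⟨ha0, hb0⟩
    have := hrepr (x - p)
    rw [ha0, hb0, mul_zero, mul_zero, add_zero, hlxp] at this
    linarith
  set v : Fin 2 → ℝ := ![-b, a] with hv
  have hlv : ∀ (u : Fin 2 → ℝ), l u = 0 → ∃ θ : ℝ, θ • v = u := by
    intro u hu
    rw [hrepr u] at hu
    by_cases haz : a = 0
    · have hbz : b ≠ 0 := fun hbz => hne ⟨haz, hbz⟩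
      refine ⟨-(u 0) / b, ?_⟩
      funext j
      fin_cases j
      · show (-(u 0) / b) * (-b) = u 0
        field_simp
      · show (-(u 0) / b) * a = u 1
        rw [haz, mul_zero]
        rw [haz, mul_zero, zero_add] at hu
        rcases mul_eq_zero.mp hu with h | h
        · exact h.symm
        · exact absurd h hbz
    · refine ⟨u 1 / a, ?_⟩
      funext j
      fin_cases j
      · show (u 1 / a) * (-b) = u 0
        field_simp
        nlinarith [hu]
      · show (u 1 / a) * a = u 1
        field_simp
  set pl : ℝ →ᵃ[ℝ] (Fin 2 → ℝ) := AffineMap.lineMap p (p + v) with hpl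
  have hplev : ∀ θ : ℝ, pl θ = θ • v + p := by
    intro θ
    rw [hpl, AffineMap.lineMap_apply]
    simp
  set g : Fin k → ℝ →ᵃ[ℝ] ℝ := fun i => (f i.castSucc).comp pl with hg
  have hsub : doubles f ⊆ sgns g := by
    intro t ht
    obtain ⟨z, hz, hz0⟩ := doubles_exists_zero f ht
    have hlz : l (z - p) = 0 := by
      have hv2 := (f (Fin.last k)).linearMap_vsub z p
      simp only [vsub_eq_sub] at hv2
      rw [← hl] at hv2
      rw [hv2, hp0, hz0, sub_zero]
    obtain ⟨θ, hθ⟩ := hlv (z - p) hlz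
    have hplθ : pl θ = z := by
      rw [hplev, hθ]; abel
    rw [mem_sgns]
    refine ⟨θ, fun i => ?_⟩
    have : g i θ = f i.castSucc z := by rw [hg]; simp [AffineMap.comp_apply, hplθ]
    rw [this]
    exact hz i
  calc (doubles f).card ≤ (sgns g).card := Finset.card_le_card hsub
    _ ≤ k + 1 := card_sgns_line k g

/-- Plane arrangement bound. -/
lemma card_sgns_plane : ∀ (k : ℕ) (f : Fin k → (Fin 2 → ℝ) →ᵃ[ℝ] ℝ),
    (sgns f).card ≤ 1 + k * (k + 1) / 2
  | 0, f => by
    calc (sgns f).card ≤ Fintype.card (Fin 0 → Bool) := Finset.card_le_univ _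
      _ = 1 := by simp
  | (k+1), f => by
    have harith : (k+1) * ((k+1) + 1) / 2 = k * (k+1) / 2 + (k+1) := by
      obtain ⟨m, hm⟩ := Nat.even_mul_succ_self k
      have h2 : (k+1) * ((k+1)+1) = k * (k+1) + 2*(k+1) := by ring
      rw [h2, hm]
      omega
    calc (sgns f).card ≤ (sgns (fun i => f i.castSucc)).card + (doubles f).card :=
        card_sgns_le_step f
      _ ≤ (1 + k * (k+1) / 2) + (k + 1) := add_le_add (card_sgns_plane k _) (card_doubles_le_plane f)
      _ = 1 + (k+1) * ((k+1) + 1) / 2 := by rw [harith]; ring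

/-- Closed cell. -/
def cellC {k : ℕ} (f : Fin k → E →ᵃ[ℝ] ℝ) (s : Fin k → Bool) : Set E :=
  {x | ∀ i, if s i then 0 ≤ f i x else f i x ≤ 0}

lemma convex_cellC {k : ℕ} (f : Fin k → E →ᵃ[ℝ] ℝ) (s : Fin k → Bool) :
    Convex ℝ (cellC f s) := by
  intro x hx y hy a b ha hb hab
  intro i
  have hx' := hx i
  have hy' := hy i
  have hxy : a • x + b • y = AffineMap.lineMap x y b := by
    rw [AffineMap.lineMap_apply]
    have ha1 : a = 1 - b := by linarith
    subst ha1
    simp only [vsub_eq_sub, vadd_eq_add, smul_sub, sub_smul, one_smul]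
    abel
  have key : f i (a • x + b • y) = b * (f i y - f i x) + f i x := by
    rw [hxy, AffineMap.apply_lineMap, AffineMap.lineMap_apply]
    simp [smul_eq_mul]
  cases hsi : s i with
  | true =>
    simp [hsi] at hx' hy' ⊢
    rw [key]
    nlinarith [mul_nonneg ha hx', mul_nonneg hb hy']
  | false =>
    simp [hsi] at hx' hy' ⊢
    rw [key]
    nlinarith [mul_nonneg ha (neg_nonneg.2 hx'), mul_nonneg hb (neg_nonneg.2 hy')]

lemma cellO_subset_cellC {k : ℕ} (f : Fin k → E →ᵃ[ℝ] ℝ) (s : Fin k → Bool) :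
    cellO f s ⊆ cellC f s := by
  intro x hx i
  have := hx i
  cases hsi : s i
  · simpa [hsi] using this
  · simp only [hsi] at this ⊢
    simp at this ⊢
    exact this.le

end Arrangement

/-- The affine map given by one row of the layer. -/
noncomputable def rowAff {w : ℕ} (A : Matrix (Fin w) (Fin 2) ℝ) (b : Fin w → ℝ) (j : Fin w) :
    (Fin 2 → ℝ) →ᵃ[ℝ] ℝ where
  toFun := fun x => A.mulVec x j + b j
  linear := (LinearMap.proj j).comp A.mulVecLin
  map_vadd' := by
    intro p v
    simp [Matrix.mulVec_add]
    ring


/-- One ReLU layer on `ℝ²` is piecewise affine with at most `1 + w(w+1)/2` convex pieces. -/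
theorem relu_layer_pieces (w : ℕ) (hw : 1 ≤ w) (A : Matrix (Fin w) (Fin 2) ℝ)
    (b : Fin w → ℝ) :
    ∃ (N : ℕ), N ≤ 1 + w * (w + 1) / 2 ∧
      ∃ (C : Fin N → Set (Fin 2 → ℝ)) (g : Fin N → ((Fin 2 → ℝ) →ᵃ[ℝ] (Fin w → ℝ))),
        (∀ i, Convex ℝ (C i)) ∧ (⋃ i, C i) = Set.univ ∧
        ∀ i, ∀ x ∈ C i, relu (A.mulVec x + b) = g i x := by
  classical
  set f : Fin w → (Fin 2 → ℝ) →ᵃ[ℝ] ℝ := rowAff A b with hf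
  refine ⟨(sgns f).card, card_sgns_plane w f, ?_⟩
  set e : Fin (sgns f).card → (Fin w → Bool) :=
    fun i => ((sgns f).equivFin.symm i : Fin w → Bool) with he
  refine ⟨fun i => cellC f (e i),
    fun i => AffineMap.pi (fun j => if e i j then f j else AffineMap.const ℝ _ (0:ℝ)),
    fun i => convex_cellC f (e i), ?_, ?_⟩
  · ext x
    simp only [Set.mem_iUnion, Set.mem_univ, iff_true]
    set s : Fin w → Bool := fun j => decide (0 < f j x) with hs
    have hxs : x ∈ cellO f s := by
      intro j
      by_cases h : 0 < f j x
      · simp [hs, h]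
      · simp [hs, h]
        exact le_of_not_gt h
    have hmem : s ∈ sgns f := mem_sgns.mpr ⟨x, hxs⟩
    refine ⟨(sgns f).equivFin ⟨s, hmem⟩, ?_⟩
    have hei : e ((sgns f).equivFin ⟨s, hmem⟩) = s := by simp [he]
    rw [hei]
    exact cellO_subset_cellC f s hxs
  · intro i x hx
    funext j
    show max ((A.mulVec x + b) j) 0 = _
    have hfx : (A.mulVec x + b) j = f j x := rfl
    rw [hfx, AffineMap.pi_apply]
    have hxj := hx j
    cases hsj : e i j
    · simp only [hsj] at hxj ⊢
      simp at hxj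
      simp
      exact hxj
    · simp only [hsj] at hxj ⊢
      simp at hxj
      simp
      exact hxj
end
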